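/- arXiv:2406.14302 — 8 statements merged into one kernel-verified Lean document; each statement's English description precedes it below -/
import Mathlib

section
/- Markov property under cause variability: Suppose the quadruple (X¹, Y¹, X², Y²) admits a cause-variability X→Y representation. Then Y¹ is conditionally independent of X² given X¹, and Y² is conditionally independent of X¹ given X². -/
open MeasureTheory ProbabilityTheory

/-- `A` is conditionally independent of `B` given `C`: conditional independence of the
σ-algebras generated by `A` and `B` given the σ-algebra generated by `C`. -/
def CondIndepRV {Ω β γ δ : Type*} [MeasurableSpace Ω] [StandardBorelSpace Ω]
    [MeasurableSpace β] [MeasurableSpace γ] [MeasurableSpace δ]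
    (P : Measure Ω) [IsFiniteMeasure P]
    (A : Ω → β) (B : Ω → γ) (C : Ω → δ) (hC : Measurable C) : Prop :=
  ProbabilityTheory.CondIndepFun (MeasurableSpace.comap C inferInstance) hC.comap_le A B P

/-- Joint law on `E × F` of a pair whose first component has law `m` and whose conditional
law of the second component given that the first equals `x` is `b x`. -/
noncomputable def jointXY {E F : Type*} [MeasurableSpace E] [MeasurableSpace F]
    (m : Measure E) (b : E → Measure F) : Measure (E × F) :=
  m.bind fun x => (b x).map fun y => (x, y)

/-- Joint law on `E × F` of a pair whose *second* component has law `m` and whose conditional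
law of the first component given that the second equals `y` is `a y`. -/
noncomputable def jointYX {E F : Type*} [MeasurableSpace E] [MeasurableSpace F]
    (m : Measure F) (a : F → Measure E) : Measure (E × F) :=
  m.bind fun y => (a y).map fun x => (x, y)

/-- Law of the quadruple `((X¹,Y¹),(X²,Y²))`. -/
noncomputable def quadLaw {Ω E F : Type*} [MeasurableSpace Ω] [MeasurableSpace E]
    [MeasurableSpace F] (P : Measure Ω)
    (X1 : Ω → E) (Y1 : Ω → F) (X2 : Ω → E) (Y2 : Ω → F) :
    Measure ((E × F) × (E × F)) :=
  P.map fun ω => ((X1 ω, Y1 ω), (X2 ω, Y2 ω))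

/-- Cause-variability `X → Y` representation: a mixture over `θ ~ μ` of laws under which
`(X¹,Y¹)` and `(X²,Y²)` are i.i.d. with `Xⁱ ~ α θ` and `Yⁱ | Xⁱ = x ~ β x`. -/
def HasCauseVarRep {Ω E F : Type*} [MeasurableSpace Ω] [MeasurableSpace E] [MeasurableSpace F]
    (P : Measure Ω) (X1 : Ω → E) (Y1 : Ω → F) (X2 : Ω → E) (Y2 : Ω → F) : Prop :=
  ∃ (T : Type) (_ : MeasurableSpace T) (μ : Measure T) (_ : IsProbabilityMeasure μ)
    (α : Kernel T E) (_ : IsMarkovKernel α) (β : Kernel E F) (_ : IsMarkovKernel β),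
    quadLaw P X1 Y1 X2 Y2 =
      μ.bind fun θ => (jointXY (α θ) fun x => β x).prod (jointXY (α θ) fun x => β x)

/-- Mechanism-variability `X → Y` representation: a mixture over `ψ ~ ν` of laws under which
`(X¹,Y¹)` and `(X²,Y²)` are i.i.d. with `Xⁱ ~ π` and `Yⁱ | Xⁱ = x ~ β (ψ, x)`. -/
def HasMechVarRep {Ω E F : Type*} [MeasurableSpace Ω] [MeasurableSpace E] [MeasurableSpace F]
    (P : Measure Ω) (X1 : Ω → E) (Y1 : Ω → F) (X2 : Ω → E) (Y2 : Ω → F) : Prop :=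
  ∃ (Ψ : Type) (_ : MeasurableSpace Ψ) (ν : Measure Ψ) (_ : IsProbabilityMeasure ν)
    (π : Measure E) (_ : IsProbabilityMeasure π)
    (β : Kernel (Ψ × E) F) (_ : IsMarkovKernel β),
    quadLaw P X1 Y1 X2 Y2 =
      ν.bind fun ψ =>
        (jointXY π fun x => β (ψ, x)).prod (jointXY π fun x => β (ψ, x))

/-- Reverse-direction `Y → X` representation: a mixture over `(θ, ψ) ~ μ ⊗ ν` of laws under
which `(Y¹,X¹)` and `(Y²,X²)` are i.i.d. with `Yⁱ ~ β ψ` and `Xⁱ | Yⁱ = y ~ α (θ, y)`. -/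
def HasRevRep {Ω E F : Type*} [MeasurableSpace Ω] [MeasurableSpace E] [MeasurableSpace F]
    (P : Measure Ω) (X1 : Ω → E) (Y1 : Ω → F) (X2 : Ω → E) (Y2 : Ω → F) : Prop :=
  ∃ (T : Type) (_ : MeasurableSpace T) (Ψ : Type) (_ : MeasurableSpace Ψ)
    (μ : Measure T) (_ : IsProbabilityMeasure μ) (ν : Measure Ψ) (_ : IsProbabilityMeasure ν)
    (β : Kernel Ψ F) (_ : IsMarkovKernel β) (α : Kernel (T × F) E) (_ : IsMarkovKernel α),
    quadLaw P X1 Y1 X2 Y2 =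
      (μ.prod ν).bind fun p =>
        (jointYX (β p.2) fun y => α (p.1, y)).prod (jointYX (β p.2) fun y => α (p.1, y))

open scoped ENNReal in
lemma markov_aux {Ω E F : Type*} [MeasurableSpace Ω] [StandardBorelSpace Ω]
    [MeasurableSpace E] [MeasurableSpace F]
    (P : Measure Ω) [IsProbabilityMeasure P]
    (X1 X2 : Ω → E) (Y1 Y2 : Ω → F)
    (hX1 : Measurable X1) (hY1 : Measurable Y1) (hX2 : Measurable X2) (hY2 : Measurable Y2)
    {T : Type} [MeasurableSpace T] (μ : Measure T) [IsProbabilityMeasure μ]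
    (κ : Kernel T (E × F)) [IsMarkovKernel κ] (α : Kernel T E) [IsMarkovKernel α]
    (β : Kernel E F) [IsMarkovKernel β]
    (hfst : ∀ θ, (κ θ).map Prod.fst = α θ)
    (hrect : ∀ (θ : T) ⦃B : Set E⦄ ⦃s : Set F⦄, MeasurableSet B → MeasurableSet s →
      κ θ (B ×ˢ s) = ∫⁻ x, B.indicator (fun x => β x s) x ∂(α θ))
    (hq : P.map (fun ω => ((X1 ω, Y1 ω), (X2 ω, Y2 ω))) = μ.bind ⇑(κ ×ₖ κ)) :
    ProbabilityTheory.CondIndepFun (MeasurableSpace.comap X1 inferInstance) hX1.comap_le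
      Y1 X2 P := by
  have hquad : Measurable (fun ω => ((X1 ω, Y1 ω), (X2 ω, Y2 ω))) :=
    (hX1.prodMk hY1).prodMk (hX2.prodMk hY2)
  -- master lintegral computation
  have L2 : ∀ (f g : E → ℝ≥0∞), Measurable f → Measurable g →
      ∫⁻ ω, f (X1 ω) * g (X2 ω) ∂P
        = ∫⁻ θ, (∫⁻ x, f x ∂(α θ)) * (∫⁻ x, g x ∂(α θ)) ∂μ := by
    intro f g hf hg
    have hint : Measurable (fun p : (E × F) × (E × F) => f p.1.1 * g p.2.1) :=
      (hf.comp (measurable_fst.comp measurable_fst)).mul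
        (hg.comp (measurable_fst.comp measurable_snd))
    have h1 : ∫⁻ ω, f (X1 ω) * g (X2 ω) ∂P
        = ∫⁻ p, f p.1.1 * g p.2.1 ∂(P.map (fun ω => ((X1 ω, Y1 ω), (X2 ω, Y2 ω)))) :=
      (lintegral_map hint hquad).symm
    rw [h1, hq, Measure.lintegral_bind (κ ×ₖ κ).measurable.aemeasurable hint.aemeasurable]
    refine lintegral_congr fun θ => ?_
    have hmarg : ∀ (f : E → ℝ≥0∞), Measurable f →
        ∫⁻ q : E × F, f q.1 ∂(κ θ) = ∫⁻ x, f x ∂(α θ) := fun f hf => by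
      rw [← hfst θ, lintegral_map hf measurable_fst]
    rw [Kernel.prod_apply]
    rw [lintegral_prod_mul (f := fun q : E × F => f q.1) (g := fun q : E × F => g q.1)
      (hf.comp measurable_fst).aemeasurable (hg.comp measurable_fst).aemeasurable]
    rw [hmarg f hf, hmarg g hg]
  -- set computation
  have L3 : ∀ ⦃B : Set E⦄ ⦃s : Set F⦄ ⦃t : Set E⦄, MeasurableSet B → MeasurableSet s →
      MeasurableSet t →
      P (X1 ⁻¹' B ∩ Y1 ⁻¹' s ∩ X2 ⁻¹' t)
        = ∫⁻ θ, (∫⁻ x, B.indicator (fun x => β x s) x ∂(α θ)) * α θ t ∂μ := by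
    intro B s t hB hs ht
    have hset : X1 ⁻¹' B ∩ Y1 ⁻¹' s ∩ X2 ⁻¹' t
        = (fun ω => ((X1 ω, Y1 ω), (X2 ω, Y2 ω))) ⁻¹' ((B ×ˢ s) ×ˢ (t ×ˢ Set.univ)) := by
      ext ω
      simp only [Set.mem_inter_iff, Set.mem_preimage, Set.mem_prod, Set.mem_univ, and_true]
    have hAm : MeasurableSet ((B ×ˢ s) ×ˢ (t ×ˢ (Set.univ : Set F))) :=
      (hB.prod hs).prod (ht.prod MeasurableSet.univ)
    rw [hset, ← Measure.map_apply hquad hAm, hq,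
      Measure.bind_apply hAm (κ ×ₖ κ).measurable.aemeasurable]
    refine lintegral_congr fun θ => ?_
    rw [Kernel.prod_apply, Measure.prod_prod, hrect θ hB hs]
    congr 1
    rw [Set.prod_univ, ← Measure.map_apply measurable_fst ht, hfst θ]
  -- real-integral computation
  rw [condIndepFun_iff_condExp_inter_preimage_eq_mul hY1 hX2]
  intro s t hs ht
  have hm' : MeasurableSpace.comap X1 inferInstance ≤ ‹MeasurableSpace Ω› := hX1.comap_le
  have hβs : Measurable fun x => β x s := β.measurable_coe hs
  have hX1m' : Measurable[MeasurableSpace.comap X1 inferInstance] X1 :=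
    comap_measurable X1
  have hg1meas : Measurable[MeasurableSpace.comap X1 inferInstance]
      fun ω => (β (X1 ω) s).toReal := (ENNReal.measurable_toReal.comp hβs).comp hX1m'
  have hg1sm : StronglyMeasurable[MeasurableSpace.comap X1 inferInstance]
      fun ω => (β (X1 ω) s).toReal := hg1meas.stronglyMeasurable
  have hg1bd : ∀ ω, ‖(β (X1 ω) s).toReal‖ ≤ 1 := fun ω => by
    rw [Real.norm_eq_abs, abs_of_nonneg ENNReal.toReal_nonneg]
    calc (β (X1 ω) s).toReal ≤ (1 : ℝ≥0∞).toReal :=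
          ENNReal.toReal_mono ENNReal.one_ne_top prob_le_one
      _ = 1 := ENNReal.toReal_one
  have hg1int : Integrable (fun ω => (β (X1 ω) s).toReal) P :=
    (integrable_const (1:ℝ)).mono' (hg1meas.mono hm' le_rfl).aestronglyMeasurable
      (Filter.Eventually.of_forall hg1bd)
  have RInt : ∀ ⦃B : Set E⦄ ⦃t' : Set E⦄, MeasurableSet B → MeasurableSet t' →
      ∫ ω, (B.indicator (fun x => β x s) (X1 ω)
          * t'.indicator (fun _ => (1:ℝ≥0∞)) (X2 ω)).toReal ∂P
        = (P (X1 ⁻¹' B ∩ Y1 ⁻¹' s ∩ X2 ⁻¹' t')).toReal := by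
    intro B t' hB ht'
    have hfm : Measurable (B.indicator (fun x => β x s)) := hβs.indicator hB
    have hgm : Measurable (t'.indicator (fun _ : E => (1:ℝ≥0∞))) := measurable_const.indicator ht'
    have haem : AEMeasurable (fun ω => B.indicator (fun x => β x s) (X1 ω)
        * t'.indicator (fun _ : E => (1:ℝ≥0∞)) (X2 ω)) P :=
      ((hfm.comp hX1).mul (hgm.comp hX2)).aemeasurable
    rw [integral_toReal haem ?_]
    · congr 1
      rw [L2 _ _ hfm hgm, L3 hB hs ht']
      refine lintegral_congr fun θ => ?_
      rw [lintegral_indicator_const ht', one_mul]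
    · refine Filter.Eventually.of_forall fun ω => ?_
      have h1 : B.indicator (fun x => β x s) (X1 ω) ≠ ∞ := by
        by_cases h : X1 ω ∈ B <;> simp [h, measure_ne_top]
      have h2 : t'.indicator (fun _ : E => (1:ℝ≥0∞)) (X2 ω) ≠ ∞ := by
        by_cases h : X2 ω ∈ t' <;> simp [h]
      exact ENNReal.mul_lt_top h1.lt_top h2.lt_top
  -- Step A: the conditional expectation of 1_{Y1 ∈ s} given X1 is β (X1 ω) s
  have stepA : (fun ω => (β (X1 ω) s).toReal)
      =ᵐ[P] P⟦Y1 ⁻¹' s | MeasurableSpace.comap X1 inferInstance⟧ := by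
    refine ae_eq_condExp_of_forall_setIntegral_eq hm'
      ((integrable_const (1:ℝ)).indicator (hY1 hs))
      (fun A hA _ => hg1int.integrableOn)
      (fun A hA _ => ?_) hg1sm.aestronglyMeasurable
    obtain ⟨B, hB, rfl⟩ := hA
    have h1 : ∫ ω in X1 ⁻¹' B, (β (X1 ω) s).toReal ∂P
        = ∫ ω, (B.indicator (fun x => β x s) (X1 ω)
            * Set.univ.indicator (fun _ => (1:ℝ≥0∞)) (X2 ω)).toReal ∂P := by
      rw [← integral_indicator (hX1 hB)]
      refine integral_congr_ae (Filter.Eventually.of_forall fun ω => ?_)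
      by_cases h : X1 ω ∈ B <;> simp [h]
    rw [h1, RInt hB MeasurableSet.univ, integral_indicator (hY1 hs), setIntegral_const,
      smul_eq_mul, mul_one, measureReal_def, Measure.restrict_apply (hY1 hs)]
    congr 1
    rw [Set.preimage_univ, Set.inter_univ, Set.inter_comm]
  -- Step B
  have hf2int : Integrable ((X2 ⁻¹' t).indicator fun _ => (1:ℝ)) P :=
    (integrable_const 1).indicator (hX2 ht)
  have stepB : (fun ω => (β (X1 ω) s).toReal
        * (P⟦X2 ⁻¹' t | MeasurableSpace.comap X1 inferInstance⟧) ω)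
      =ᵐ[P] P⟦Y1 ⁻¹' s ∩ X2 ⁻¹' t | MeasurableSpace.comap X1 inferInstance⟧ := by
    refine ae_eq_condExp_of_forall_setIntegral_eq hm'
      ((integrable_const (1:ℝ)).indicator ((hY1 hs).inter (hX2 ht)))
      (fun A hA _ => (Integrable.bdd_mul integrable_condExp
          (hg1meas.mono hm' le_rfl).aestronglyMeasurable (Filter.Eventually.of_forall hg1bd)).integrableOn)
      (fun A hA _ => ?_) (hg1sm.mul stronglyMeasurable_condExp).aestronglyMeasurable
    obtain ⟨B, hB, rfl⟩ := hA
    have hhsm : StronglyMeasurable[MeasurableSpace.comap X1 inferInstance]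
        (fun ω => B.indicator (fun x => (β x s).toReal) (X1 ω)) :=
      (((ENNReal.measurable_toReal.comp hβs).indicator hB).comp hX1m').stronglyMeasurable
    have hhbd : ∀ᵐ ω ∂P, ‖B.indicator (fun x => (β x s).toReal) (X1 ω)‖ ≤ 1 := by
      refine Filter.Eventually.of_forall fun ω => ?_
      by_cases h : X1 ω ∈ B
      · rw [Set.indicator_of_mem h]; exact hg1bd ω
      · simp [Set.indicator_of_notMem h]
    have hpull := condExp_stronglyMeasurable_mul_of_bound hm' hhsm hf2int 1 hhbd
    have hprodint : Integrable ((fun ω => B.indicator (fun x => (β x s).toReal) (X1 ω))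
        * (X2 ⁻¹' t).indicator fun _ => (1:ℝ)) P :=
      Integrable.bdd_mul hf2int ((hhsm.mono hm').aestronglyMeasurable)
        (Filter.Eventually.of_forall fun ω => by
          by_cases h : X1 ω ∈ B
          · rw [Set.indicator_of_mem h]; exact hg1bd ω
          · simp [Set.indicator_of_notMem h])
    have e1 : ∫ ω in X1 ⁻¹' B, (β (X1 ω) s).toReal
          * (P⟦X2 ⁻¹' t | MeasurableSpace.comap X1 inferInstance⟧) ω ∂P
        = ∫ ω, B.indicator (fun x => (β x s).toReal) (X1 ω)
            * (P⟦X2 ⁻¹' t | MeasurableSpace.comap X1 inferInstance⟧) ω ∂P := by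
      rw [← integral_indicator (hX1 hB)]
      refine integral_congr_ae (Filter.Eventually.of_forall fun ω => ?_)
      by_cases h : X1 ω ∈ B <;> simp [h]
    have e2 : ∫ ω, B.indicator (fun x => (β x s).toReal) (X1 ω)
            * (P⟦X2 ⁻¹' t | MeasurableSpace.comap X1 inferInstance⟧) ω ∂P
        = ∫ ω, B.indicator (fun x => (β x s).toReal) (X1 ω)
            * (X2 ⁻¹' t).indicator (fun _ => (1:ℝ)) ω ∂P := by
      calc ∫ ω, B.indicator (fun x => (β x s).toReal) (X1 ω)
              * (P⟦X2 ⁻¹' t | MeasurableSpace.comap X1 inferInstance⟧) ω ∂P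
          = ∫ ω, (P[(fun ω => B.indicator (fun x => (β x s).toReal) (X1 ω))
              * ((X2 ⁻¹' t).indicator fun _ => (1:ℝ))
              | MeasurableSpace.comap X1 inferInstance]) ω ∂P :=
            (integral_congr_ae hpull).symm
        _ = ∫ ω, B.indicator (fun x => (β x s).toReal) (X1 ω)
              * (X2 ⁻¹' t).indicator (fun _ => (1:ℝ)) ω ∂P := by
            rw [integral_condExp hm']
            rfl
    have e3 : ∫ ω, B.indicator (fun x => (β x s).toReal) (X1 ω)
            * (X2 ⁻¹' t).indicator (fun _ => (1:ℝ)) ω ∂P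
        = ∫ ω, (B.indicator (fun x => β x s) (X1 ω)
            * t.indicator (fun _ => (1:ℝ≥0∞)) (X2 ω)).toReal ∂P := by
      refine integral_congr_ae (Filter.Eventually.of_forall fun ω => ?_)
      by_cases h1 : X1 ω ∈ B <;> by_cases h2 : X2 ω ∈ t <;>
        simp [h1, h2, ENNReal.toReal_mul]
    rw [e1, e2, e3, RInt hB ht, integral_indicator ((hY1 hs).inter (hX2 ht)),
      setIntegral_const, smul_eq_mul, mul_one,
      measureReal_def, Measure.restrict_apply ((hY1 hs).inter (hX2 ht))]
    have hseteq : Y1 ⁻¹' s ∩ X2 ⁻¹' t ∩ X1 ⁻¹' B = X1 ⁻¹' B ∩ Y1 ⁻¹' s ∩ X2 ⁻¹' t := by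
      ext ω
      simp only [Set.mem_inter_iff, Set.mem_preimage]
      tauto
    rw [hseteq]
  calc P⟦Y1 ⁻¹' s ∩ X2 ⁻¹' t | MeasurableSpace.comap X1 inferInstance⟧
      =ᵐ[P] fun ω => (β (X1 ω) s).toReal
        * (P⟦X2 ⁻¹' t | MeasurableSpace.comap X1 inferInstance⟧) ω := stepB.symm
    _ =ᵐ[P] fun ω => (P⟦Y1 ⁻¹' s | MeasurableSpace.comap X1 inferInstance⟧) ω
        * (P⟦X2 ⁻¹' t | MeasurableSpace.comap X1 inferInstance⟧) ω := by
      filter_upwards [stepA] with ω hω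
      rw [← hω]

lemma jointXY_eq_kernel {E F : Type*} [MeasurableSpace E] [MeasurableSpace F]
    (m : Measure E) (β : Kernel E F) [IsMarkovKernel β] {T : Type} [MeasurableSpace T]
    (α : Kernel T E) [IsMarkovKernel α] (θ : T) (hm : m = α θ) :
    jointXY m (fun x => β x) = (α ⊗ₖ Kernel.prodMkLeft T β) θ := by
  subst hm
  have hcoe : (fun x => (β x).map fun y => (x, y)) = ⇑(Kernel.id ×ₖ β) := by
    funext x
    rw [Kernel.prod_apply, Kernel.id_apply, Measure.dirac_prod]
  ext A hA
  rw [jointXY, hcoe, Measure.bind_apply hA (Kernel.id ×ₖ β).measurable.aemeasurable,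
    Kernel.compProd_apply hA]
  refine lintegral_congr fun x => ?_
  rw [Kernel.prod_apply, Kernel.id_apply, Measure.dirac_prod, Kernel.prodMkLeft_apply,
    Measure.map_apply measurable_prodMk_left hA]


/-- **Markov property under cause variability.** If the quadruple `(X¹, Y¹, X², Y²)` admits a
cause-variability `X → Y` representation, then `Y¹ ⫫ X² | X¹` and `Y² ⫫ X¹ | X²`. -/
theorem markov_of_causeVarRep {Ω E F : Type*} [MeasurableSpace Ω] [StandardBorelSpace Ω]
    [MeasurableSpace E] [StandardBorelSpace E] [MeasurableSpace F] [StandardBorelSpace F]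
    (P : Measure Ω) [IsProbabilityMeasure P]
    (X1 X2 : Ω → E) (Y1 Y2 : Ω → F)
    (hX1 : Measurable X1) (hY1 : Measurable Y1) (hX2 : Measurable X2) (hY2 : Measurable Y2)
    (hrep : HasCauseVarRep P X1 Y1 X2 Y2) :
    CondIndepRV P Y1 X2 X1 hX1 ∧ CondIndepRV P Y2 X1 X2 hX2 := by
  obtain ⟨T, mT, μ, hμ, α, hα, β, hβ, hq⟩ := hrep
  let κ : Kernel T (E × F) := α ⊗ₖ Kernel.prodMkLeft T β
  haveI : IsMarkovKernel κ := by unfold κ; infer_instance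
  have hfst : ∀ θ, (κ θ).map Prod.fst = α θ := fun θ => by
    rw [← Kernel.fst_apply]
    unfold κ
    rw [Kernel.fst_compProd]
  have hrect : ∀ (θ : T) ⦃B : Set E⦄ ⦃s : Set F⦄, MeasurableSet B → MeasurableSet s →
      κ θ (B ×ˢ s) = ∫⁻ x, B.indicator (fun x => β x s) x ∂(α θ) := by
    intro θ B s hB hs
    unfold κ
    rw [Kernel.compProd_apply (hB.prod hs)]
    refine lintegral_congr fun x => ?_
    rw [Kernel.prodMkLeft_apply]
    by_cases hx : x ∈ B
    · rw [Set.indicator_of_mem hx]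
      congr 1
      ext y
      simp [hx]
    · rw [Set.indicator_of_notMem hx]
      have : {c | (x, c) ∈ B ×ˢ s} = (∅ : Set F) := by
        ext y; simp [hx]
      rw [show Prod.mk x ⁻¹' B ×ˢ s = {c | (x, c) ∈ B ×ˢ s} from rfl, this, measure_empty]
  have hq' : P.map (fun ω => ((X1 ω, Y1 ω), (X2 ω, Y2 ω))) = μ.bind ⇑(κ ×ₖ κ) := by
    have hfun : (fun θ => (jointXY (α θ) fun x => β x).prod (jointXY (α θ) fun x => β x))
        = ⇑(κ ×ₖ κ) := by
      funext θ
      rw [jointXY_eq_kernel (α θ) β α θ rfl, Kernel.prod_apply]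
    rw [← hfun]
    exact hq
  have hquad2 : Measurable (fun ω => ((X2 ω, Y2 ω), (X1 ω, Y1 ω))) :=
    (hX2.prodMk hY2).prodMk (hX1.prodMk hY1)
  have hq2 : P.map (fun ω => ((X2 ω, Y2 ω), (X1 ω, Y1 ω))) = μ.bind ⇑(κ ×ₖ κ) := by
    ext A hA
    have hswapA : MeasurableSet (Prod.swap ⁻¹' A) := measurable_swap hA
    calc P.map (fun ω => ((X2 ω, Y2 ω), (X1 ω, Y1 ω))) A
        = P ((fun ω => ((X2 ω, Y2 ω), (X1 ω, Y1 ω))) ⁻¹' A) := Measure.map_apply hquad2 hA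
      _ = P ((fun ω => ((X1 ω, Y1 ω), (X2 ω, Y2 ω))) ⁻¹' (Prod.swap ⁻¹' A)) := rfl
      _ = P.map (fun ω => ((X1 ω, Y1 ω), (X2 ω, Y2 ω))) (Prod.swap ⁻¹' A) :=
          (Measure.map_apply ((hX1.prodMk hY1).prodMk (hX2.prodMk hY2)) hswapA).symm
      _ = μ.bind ⇑(κ ×ₖ κ) (Prod.swap ⁻¹' A) := by rw [hq']
      _ = ∫⁻ θ, (κ ×ₖ κ) θ (Prod.swap ⁻¹' A) ∂μ :=
          Measure.bind_apply hswapA (κ ×ₖ κ).measurable.aemeasurable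
      _ = ∫⁻ θ, (κ ×ₖ κ) θ A ∂μ := by
          refine lintegral_congr fun θ => ?_
          rw [Kernel.prod_apply]
          rw [← Measure.map_apply measurable_swap hA]
          rw [Measure.prod_swap]
      _ = μ.bind ⇑(κ ×ₖ κ) A := (Measure.bind_apply hA (κ ×ₖ κ).measurable.aemeasurable).symm
  exact ⟨markov_aux P X1 X2 Y1 Y2 hX1 hY1 hX2 hY2 μ κ α β hfst hrect hq',
    markov_aux P X2 X1 Y2 Y1 hX2 hY2 hX1 hY1 μ κ α β hfst hrect hq2⟩
end

section
/- Conditional independence of effects given causes under cause variability: Suppose the quadruple (X¹, Y¹, X², Y²) admits a cause-variability X→Y representation. Then Y¹ and Y² are conditionally independent given the pair (X¹, X²). -/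
open MeasureTheory ProbabilityTheory

section Auxiliary

open Set

variable {γ δ : Type*} [MeasurableSpace γ] [MeasurableSpace δ]

/-- The product kernel `(x₁, x₂) ↦ (β x₁) × (β x₂)`. -/
noncomputable def CVRaux.prodKer {E F : Type*} [MeasurableSpace E] [MeasurableSpace F]
    (β : Kernel E F) [IsSFiniteKernel β] : Kernel (E × E) (F × F) :=
  (β.comap Prod.fst measurable_fst) ×ₖ (β.comap Prod.snd measurable_snd)

namespace CVRaux

instance {E F : Type*} [MeasurableSpace E] [MeasurableSpace F]
    (β : Kernel E F) [IsMarkovKernel β] : IsMarkovKernel (prodKer β) := by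
  rw [prodKer]; infer_instance

lemma prodKer_apply {E F : Type*} [MeasurableSpace E] [MeasurableSpace F]
    (β : Kernel E F) [IsSFiniteKernel β] (p : E × E) :
    prodKer β p = (β p.1).prod (β p.2) := by
  rw [prodKer, Kernel.prod_apply, Kernel.comap_apply, Kernel.comap_apply]

lemma measurable_map_prod_mk (κ : Kernel γ δ) [IsSFiniteKernel κ] :
    Measurable fun x : γ => (κ x).map (Prod.mk x) := by
  have h : (fun x : γ => (κ x).map (Prod.mk x)) = fun x => (Kernel.id ×ₖ κ) x := by
    funext x
    rw [Kernel.prod_apply, Kernel.id_apply, Measure.dirac_prod]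
  rw [h]
  exact (Kernel.id ×ₖ κ).measurable

lemma compProd_eq_bind (m : Measure γ) [SFinite m] (κ : Kernel γ δ) [IsSFiniteKernel κ] :
    m ⊗ₘ κ = m.bind fun x => (κ x).map (Prod.mk x) := by
  ext u hu
  rw [Measure.compProd_apply hu, Measure.bind_apply hu (measurable_map_prod_mk κ).aemeasurable]
  exact lintegral_congr fun x => (Measure.map_apply measurable_prodMk_left hu).symm

lemma jointXY_eq_compProd {E F : Type*} [MeasurableSpace E] [MeasurableSpace F]
    (m : Measure E) [SFinite m] (β : Kernel E F) [IsSFiniteKernel β] :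
    jointXY m (fun x => β x) = m ⊗ₘ β := by
  rw [jointXY]
  exact (compProd_eq_bind m β).symm

lemma kernel_compProd_apply_measure {T : Type*} [MeasurableSpace T]
    (R : Kernel T γ) [IsSFiniteKernel R] (κ : Kernel γ δ) [IsSFiniteKernel κ] (θ : T) :
    (R ⊗ₖ Kernel.prodMkLeft T κ) θ = R θ ⊗ₘ κ := by
  ext u hu
  rw [Kernel.compProd_apply hu, Measure.compProd_apply hu]
  rfl

lemma bind_map {T : Type*} [MeasurableSpace T]
    (μ : Measure T) (f : T → Measure γ) (hf : Measurable f) {g : γ → δ} (hg : Measurable g) :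
    (μ.bind f).map g = μ.bind fun θ => (f θ).map g := by
  ext u hu
  have hmg : Measurable (fun θ => (f θ).map g) := (Measure.measurable_map g hg).comp hf
  rw [Measure.map_apply hg hu, Measure.bind_apply (hg hu) hf.aemeasurable,
    Measure.bind_apply hu hmg.aemeasurable]
  exact lintegral_congr fun θ => (Measure.map_apply hg hu).symm

/-- Key per-parameter identity: pushing the product of two `compProd`s through the
middle-swap map gives a `compProd` of the product of the marginals with the product kernel. -/
lemma map_prod_compProd {E F : Type*} [MeasurableSpace E] [MeasurableSpace F]
    (m m' : Measure E) [IsProbabilityMeasure m] [IsProbabilityMeasure m']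
    (β : Kernel E F) [IsMarkovKernel β] :
    ((m ⊗ₘ β).prod (m' ⊗ₘ β)).map
        (fun q : (E × F) × (E × F) => ((q.1.1, q.2.1), (q.1.2, q.2.2))) =
      (m.prod m') ⊗ₘ prodKer β := by
  have he : Measurable fun q : (E × F) × (E × F) => ((q.1.1, q.2.1), (q.1.2, q.2.2)) :=
    ((measurable_fst.comp measurable_fst).prodMk (measurable_fst.comp measurable_snd)).prodMk
      ((measurable_snd.comp measurable_fst).prodMk (measurable_snd.comp measurable_snd))
  refine ext_of_generate_finite _
    (generateFrom_eq_prod generateFrom_prod generateFrom_prod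
      (isCountablySpanning_measurableSet.prod isCountablySpanning_measurableSet)
      (isCountablySpanning_measurableSet.prod isCountablySpanning_measurableSet)).symm
    (isPiSystem_prod.prod isPiSystem_prod) ?_ ?_
  · rintro _ ⟨_, ⟨A1, hA1, A2, hA2, rfl⟩, _, ⟨B1, hB1, B2, hB2, rfl⟩, rfl⟩
    have hA1' : MeasurableSet A1 := hA1
    have hA2' : MeasurableSet A2 := hA2
    have hB1' : MeasurableSet B1 := hB1
    have hB2' : MeasurableSet B2 := hB2
    have hpre : (fun q : (E × F) × (E × F) => ((q.1.1, q.2.1), (q.1.2, q.2.2))) ⁻¹'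
        ((A1 ×ˢ A2) ×ˢ (B1 ×ˢ B2)) = (A1 ×ˢ B1) ×ˢ (A2 ×ˢ B2) := by
      ext ⟨⟨x1, y1⟩, ⟨x2, y2⟩⟩
      simp only [Set.mem_preimage, Set.mem_prod]
      tauto
    rw [Measure.map_apply he ((hA1'.prod hA2').prod (hB1'.prod hB2')), hpre,
      Measure.prod_prod, Measure.compProd_apply_prod hA1' hB1',
      Measure.compProd_apply_prod hA2' hB2',
      Measure.compProd_apply_prod (hA1'.prod hA2') (hB1'.prod hB2')]
    have hker : ∀ p : E × E, prodKer β p (B1 ×ˢ B2) = β p.1 B1 * β p.2 B2 := fun p => by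
      rw [prodKer_apply, Measure.prod_prod]
    simp_rw [hker]
    rw [← Measure.prod_restrict]
    rw [MeasureTheory.lintegral_prod_mul (Kernel.measurable_coe β hB1').aemeasurable
      (Kernel.measurable_coe β hB2').aemeasurable]
  · rw [Measure.map_apply he MeasurableSet.univ, Set.preimage_univ]
    simp [measure_univ]

end CVRaux

end Auxiliary

/-- **Conditional independence of effects given causes under cause variability.** If the
quadruple `(X¹, Y¹, X², Y²)` admits a cause-variability `X → Y` representation, then
`Y¹` and `Y²` are conditionally independent given the pair `(X¹, X²)`. -/
theorem condIndep_effects_of_causeVarRep {Ω E F : Type*} [MeasurableSpace Ω]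
    [StandardBorelSpace Ω]
    [MeasurableSpace E] [StandardBorelSpace E] [MeasurableSpace F] [StandardBorelSpace F]
    (P : Measure Ω) [IsProbabilityMeasure P]
    (X1 X2 : Ω → E) (Y1 Y2 : Ω → F)
    (hX1 : Measurable X1) (hY1 : Measurable Y1) (hX2 : Measurable X2) (hY2 : Measurable Y2)
    (hrep : HasCauseVarRep P X1 Y1 X2 Y2) :
    CondIndepRV P Y1 Y2 (fun ω => (X1 ω, X2 ω)) (hX1.prodMk hX2) := by
  obtain ⟨T, mT, μ, hμ, α, hα, β, hβ, hq⟩ := hrep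
  have hΩ : Nonempty Ω := by
    by_contra h
    have h1 : P Set.univ = 1 := measure_univ
    rw [Set.univ_eq_empty_iff.mpr (not_nonempty_iff.mp h), measure_empty] at h1
    exact zero_ne_one h1
  haveI hF : Nonempty F := ⟨Y1 hΩ.some⟩
  have hZ : Measurable fun ω => (X1 ω, X2 ω) := hX1.prodMk hX2
  have hW : Measurable fun ω => (Y1 ω, Y2 ω) := hY1.prodMk hY2
  have he : Measurable fun q : (E × F) × (E × F) => ((q.1.1, q.2.1), (q.1.2, q.2.2)) :=
    ((measurable_fst.comp measurable_fst).prodMk (measurable_fst.comp measurable_snd)).prodMk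
      ((measurable_snd.comp measurable_fst).prodMk (measurable_snd.comp measurable_snd))
  have hf0 : Measurable fun ω => ((X1 ω, Y1 ω), (X2 ω, Y2 ω)) :=
    (hX1.prodMk hY1).prodMk (hX2.prodMk hY2)
  -- Step 1: the joint law of ((X1,X2),(Y1,Y2)) is (law of (X1,X2)) ⊗ₘ (product kernel)
  have hq' : quadLaw P X1 Y1 X2 Y2 = μ.bind fun θ =>
      ((α ⊗ₖ Kernel.prodMkLeft T β) ×ₖ (α ⊗ₖ Kernel.prodMkLeft T β)) θ := by
    rw [hq]
    refine congrArg _ (funext fun θ => ?_)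
    rw [CVRaux.jointXY_eq_compProd, Kernel.prod_apply,
      CVRaux.kernel_compProd_apply_measure]
  have h1 : P.map (fun ω => ((X1 ω, X2 ω), (Y1 ω, Y2 ω))) =
      (quadLaw P X1 Y1 X2 Y2).map
        (fun q : (E × F) × (E × F) => ((q.1.1, q.2.1), (q.1.2, q.2.2))) := by
    rw [quadLaw, Measure.map_map he hf0]
    rfl
  have h2 : (quadLaw P X1 Y1 X2 Y2).map
      (fun q : (E × F) × (E × F) => ((q.1.1, q.2.1), (q.1.2, q.2.2))) =
      μ.bind fun θ => (α ×ₖ α) θ ⊗ₘ CVRaux.prodKer β := by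
    rw [hq', CVRaux.bind_map μ _
      ((α ⊗ₖ Kernel.prodMkLeft T β) ×ₖ (α ⊗ₖ Kernel.prodMkLeft T β)).measurable he]
    refine congrArg _ (funext fun θ => ?_)
    rw [Kernel.prod_apply, CVRaux.kernel_compProd_apply_measure,
      CVRaux.map_prod_compProd, Kernel.prod_apply]
  have hm2 : Measurable fun θ => (α ×ₖ α) θ ⊗ₘ CVRaux.prodKer β := by
    have hh : (fun θ => (α ×ₖ α) θ ⊗ₘ CVRaux.prodKer β) =
        fun θ => ((α ×ₖ α) ⊗ₖ Kernel.prodMkLeft T (CVRaux.prodKer β)) θ := by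
      funext θ
      rw [CVRaux.kernel_compProd_apply_measure]
    rw [hh]
    exact Kernel.measurable _
  have h3 : P.map (fun ω => (X1 ω, X2 ω)) = μ.bind fun θ => (α ×ₖ α) θ := by
    have h31 : P.map (fun ω => (X1 ω, X2 ω)) =
        (P.map fun ω => ((X1 ω, X2 ω), (Y1 ω, Y2 ω))).map Prod.fst := by
      rw [Measure.map_map measurable_fst (hZ.prodMk hW)]
      rfl
    rw [h31, h1, h2, CVRaux.bind_map μ _ hm2 measurable_fst]
    refine congrArg _ (funext fun θ => ?_)
    exact Measure.fst_compProd ((α ×ₖ α) θ) (CVRaux.prodKer β)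
  haveI hbp : IsProbabilityMeasure (μ.bind fun θ => (α ×ₖ α) θ) :=
    ⟨by rw [Measure.bind_apply MeasurableSet.univ (α ×ₖ α).measurable.aemeasurable]; simp⟩
  have hL2 : P.map (fun ω => ((X1 ω, X2 ω), (Y1 ω, Y2 ω))) =
      (P.map fun ω => (X1 ω, X2 ω)) ⊗ₘ CVRaux.prodKer β := by
    rw [h1, h2, h3, CVRaux.compProd_eq_bind, Measure.bind_bind (α ×ₖ α).measurable.aemeasurable
      (CVRaux.measurable_map_prod_mk (CVRaux.prodKer β)).aemeasurable]
    refine congrArg _ (funext fun θ => ?_)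
    exact CVRaux.compProd_eq_bind ((α ×ₖ α) θ) (CVRaux.prodKer β)
  -- Step 2: the product kernel is a.e. the conditional distribution
  have hcd := condDistrib_ae_eq_of_measure_eq_compProd (fun ω => (X1 ω, X2 ω)) hW.aemeasurable hL2
  have hae := ae_of_ae_map hZ.aemeasurable hcd
  -- Step 3: conclude
  have hker : ∀ (p : E × E) (u : Set F) (v : Set F),
      CVRaux.prodKer β p (u ×ˢ v) = β p.1 u * β p.2 v := fun p u v => by
    rw [CVRaux.prodKer_apply, Measure.prod_prod]
  unfold CondIndepRV
  rw [condIndepFun_iff_condExp_inter_preimage_eq_mul hY1 hY2]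
  intro s t hs ht
  have e1 := condDistrib_ae_eq_condExp (μ := P) hZ hW (hs.prod ht)
  have e2 := condDistrib_ae_eq_condExp (μ := P) hZ hW (hs.prod MeasurableSet.univ)
  have e3 := condDistrib_ae_eq_condExp (μ := P) hZ hW (MeasurableSet.univ.prod ht)
  have hpst : (fun ω => (Y1 ω, Y2 ω)) ⁻¹' (s ×ˢ t) = Y1 ⁻¹' s ∩ Y2 ⁻¹' t :=
    Set.mk_preimage_prod _ _
  have hps : (fun ω => (Y1 ω, Y2 ω)) ⁻¹' (s ×ˢ Set.univ) = Y1 ⁻¹' s := by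
    rw [Set.mk_preimage_prod]; simp
  have hpt : (fun ω => (Y1 ω, Y2 ω)) ⁻¹' (Set.univ ×ˢ t) = Y2 ⁻¹' t := by
    rw [Set.mk_preimage_prod]; simp
  rw [hpst] at e1
  rw [hps] at e2
  rw [hpt] at e3
  filter_upwards [e1, e2, e3, hae] with ω f1 f2 f3 f4
  rw [← f1, ← f2, ← f3, f4, measureReal_def, measureReal_def, measureReal_def, hker _ s t, hker _ s Set.univ, hker _ Set.univ t]
  simp [ENNReal.toReal_mul]
end

section
/- Markov property under mechanism variability: Suppose the quadruple (X¹, Y¹, X², Y²) admits a mechanism-variability X→Y representation. Then X¹ and X² are (unconditionally) independent, and Y¹ is conditionally independent of X² given X¹. -/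
open MeasureTheory ProbabilityTheory

section Aux
open MeasureTheory ProbabilityTheory

variable {α β γ : Type*} [MeasurableSpace α] [MeasurableSpace β] [MeasurableSpace γ]

lemma myMapBind (m : Measure α) {f : α → Measure β} (hf : Measurable f) {g : β → γ}
    (hg : Measurable g) : (m.bind f).map g = m.bind (fun a => (f a).map g) := by
  have hf' : Measurable fun a => (f a).map g := (Measure.measurable_map g hg).comp hf
  ext s hs
  rw [Measure.map_apply hg hs, Measure.bind_apply (hg hs) hf.aemeasurable, Measure.bind_apply hs hf'.aemeasurable]
  simp_rw [Measure.map_apply hg hs]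

lemma myProbBind (ν : Measure α) [IsProbabilityMeasure ν] (κ : Kernel α β) [IsMarkovKernel κ] :
    IsProbabilityMeasure (ν.bind κ) := by
  constructor
  rw [Measure.bind_apply MeasurableSet.univ (Kernel.measurable κ).aemeasurable]
  simp

lemma myBindProdConst (ν : Measure α) [IsProbabilityMeasure ν] (κ : Kernel α β)
    [IsMarkovKernel κ] (π : Measure γ) [IsProbabilityMeasure π] :
    (ν.bind fun ψ => (κ ψ).prod π) = (ν.bind κ).prod π := by
  haveI := myProbBind ν κ
  refine (Measure.prod_eq (μ := ν.bind κ) (ν := π) fun s t hs ht => ?_).symm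
  have hmeas : Measurable fun ψ => (κ ψ).prod π := by
    have : (fun ψ => (κ ψ).prod π) = fun ψ => (κ ×ₖ Kernel.const α π) ψ := by
      funext ψ; rw [Kernel.prod_apply, Kernel.const_apply]
    rw [this]
    exact Kernel.measurable _
  rw [Measure.bind_apply (hs.prod ht) hmeas.aemeasurable, Measure.bind_apply hs (Kernel.measurable κ).aemeasurable]
  simp_rw [Measure.prod_prod]
  rw [lintegral_mul_const _ (Kernel.measurable_coe κ hs)]

lemma myCondIndep {Ω β γ δ : Type*} [MeasurableSpace Ω] [StandardBorelSpace Ω]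
    [mβ : MeasurableSpace β] [mγ : MeasurableSpace γ] [mδ : MeasurableSpace δ]
    (P : Measure Ω) [IsProbabilityMeasure P]
    {A : Ω → β} {B : Ω → γ} {C : Ω → δ}
    (hA : Measurable A) (hB : Measurable B) (hC : Measurable C)
    (h : IndepFun (fun ω => (A ω, C ω)) B P) :
    CondIndepFun (MeasurableSpace.comap C mδ) hC.comap_le A B P := by
  have hpair : Measurable fun ω => (A ω, C ω) := hA.prodMk hC
  have hle : MeasurableSpace.comap C mδ
      ≤ MeasurableSpace.comap (fun ω => (A ω, C ω)) inferInstance := by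
    rintro _ ⟨u, hu, rfl⟩
    refine ⟨Set.univ ×ˢ u, MeasurableSet.univ.prod hu, ?_⟩
    ext ω; simp
  rw [condIndepFun_iff_condExp_inter_preimage_eq_mul hA hB]
  intro s t hs ht
  have hInt : ∫ x, (B ⁻¹' t).indicator (fun _ => (1 : ℝ)) x ∂P = (P (B ⁻¹' t)).toReal := by
    rw [integral_indicator_const (1 : ℝ) (hB ht), smul_eq_mul, mul_one, measureReal_def]
  have hsmB : StronglyMeasurable[MeasurableSpace.comap B mγ]
      ((B ⁻¹' t).indicator (fun _ => (1 : ℝ))) :=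
    stronglyMeasurable_const.indicator ⟨t, ht, rfl⟩
  have hBc : (P⟦B ⁻¹' t | MeasurableSpace.comap C mδ⟧) =ᵐ[P]
      fun _ => (P (B ⁻¹' t)).toReal := by
    have hBC : Indep (MeasurableSpace.comap B mγ) (MeasurableSpace.comap C mδ) P :=
      (h.symm.comp measurable_id measurable_snd : IndepFun B C P)
    have := condExp_indep_eq (μ := P) hB.comap_le hC.comap_le hsmB hBC
    rwa [hInt] at this
  have hBcAC : (P⟦B ⁻¹' t | MeasurableSpace.comap (fun ω => (A ω, C ω)) inferInstance⟧) =ᵐ[P]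
      fun _ => (P (B ⁻¹' t)).toReal := by
    have hBAC : Indep (MeasurableSpace.comap B mγ)
        (MeasurableSpace.comap (fun ω => (A ω, C ω)) inferInstance) P := h.symm
    have := condExp_indep_eq (μ := P) hB.comap_le hpair.comap_le hsmB hBAC
    rwa [hInt] at this
  have hsmA : StronglyMeasurable[MeasurableSpace.comap (fun ω => (A ω, C ω)) inferInstance]
      ((A ⁻¹' s).indicator (fun _ => (1 : ℝ))) := by
    refine stronglyMeasurable_const.indicator ?_
    exact ⟨s ×ˢ Set.univ, hs.prod MeasurableSet.univ, by ext ω; simp⟩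
  have hmul : (A ⁻¹' s ∩ B ⁻¹' t).indicator (fun _ => (1 : ℝ))
      = (A ⁻¹' s).indicator (fun _ => (1 : ℝ)) * (B ⁻¹' t).indicator (fun _ => (1 : ℝ)) := by
    classical
    funext ω
    by_cases h1 : ω ∈ A ⁻¹' s <;> by_cases h2 : ω ∈ B ⁻¹' t <;>
      simp [Set.indicator_apply, h1, h2]
  have hintB : Integrable ((B ⁻¹' t).indicator (fun _ => (1 : ℝ))) P :=
    (integrable_const (1 : ℝ)).indicator (hB ht)
  have hintAB : Integrable
      ((A ⁻¹' s).indicator (fun _ => (1 : ℝ)) * (B ⁻¹' t).indicator (fun _ => (1 : ℝ))) P := by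
    rw [← hmul]
    exact (integrable_const (1 : ℝ)).indicator ((hA hs).inter (hB ht))
  have h2 : (P⟦A ⁻¹' s ∩ B ⁻¹' t | MeasurableSpace.comap (fun ω => (A ω, C ω)) inferInstance⟧)
      =ᵐ[P] fun ω => (A ⁻¹' s).indicator (fun _ => (1 : ℝ)) ω * (P (B ⁻¹' t)).toReal := by
    calc (P⟦A ⁻¹' s ∩ B ⁻¹' t | MeasurableSpace.comap (fun ω => (A ω, C ω)) inferInstance⟧)
        = P[(A ⁻¹' s).indicator (fun _ => (1:ℝ)) * (B ⁻¹' t).indicator (fun _ => (1:ℝ)) |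
            MeasurableSpace.comap (fun ω => (A ω, C ω)) inferInstance] := by rw [hmul]
      _ =ᵐ[P] (A ⁻¹' s).indicator (fun _ => (1:ℝ)) * P[(B ⁻¹' t).indicator (fun _ => (1:ℝ)) |
            MeasurableSpace.comap (fun ω => (A ω, C ω)) inferInstance] :=
          condExp_mul_of_stronglyMeasurable_left hsmA hintAB hintB
      _ =ᵐ[P] fun ω => (A ⁻¹' s).indicator (fun _ => (1 : ℝ)) ω * (P (B ⁻¹' t)).toReal := by
          filter_upwards [hBcAC] with ω hω
          simp only [Pi.mul_apply, hω]
  have h3 : (P⟦A ⁻¹' s ∩ B ⁻¹' t | MeasurableSpace.comap C mδ⟧) =ᵐ[P]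
      (P (B ⁻¹' t)).toReal • (P⟦A ⁻¹' s | MeasurableSpace.comap C mδ⟧) := by
    calc (P⟦A ⁻¹' s ∩ B ⁻¹' t | MeasurableSpace.comap C mδ⟧)
        =ᵐ[P] P[(P⟦A ⁻¹' s ∩ B ⁻¹' t |
            MeasurableSpace.comap (fun ω => (A ω, C ω)) inferInstance⟧) |
            MeasurableSpace.comap C mδ] :=
          (condExp_condExp_of_le hle hpair.comap_le).symm
      _ =ᵐ[P] P[(fun ω => (A ⁻¹' s).indicator (fun _ => (1 : ℝ)) ω * (P (B ⁻¹' t)).toReal) |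
            MeasurableSpace.comap C mδ] := condExp_congr_ae h2
      _ = P[(P (B ⁻¹' t)).toReal • (A ⁻¹' s).indicator (fun _ => (1 : ℝ)) |
            MeasurableSpace.comap C mδ] := by
          have hfun : (fun ω => (A ⁻¹' s).indicator (fun _ => (1 : ℝ)) ω * (P (B ⁻¹' t)).toReal)
              = (P (B ⁻¹' t)).toReal • (A ⁻¹' s).indicator (fun _ => (1 : ℝ)) := by
            funext ω; rw [Pi.smul_apply, smul_eq_mul, mul_comm]
          rw [hfun]
      _ =ᵐ[P] (P (B ⁻¹' t)).toReal • (P⟦A ⁻¹' s | MeasurableSpace.comap C mδ⟧) :=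
          condExp_smul _ _ _
  refine h3.trans ?_
  filter_upwards [hBc] with ω hω
  rw [Pi.smul_apply, smul_eq_mul, hω, mul_comm]

end Aux

/-- **Markov property under mechanism variability.** If the quadruple `(X¹, Y¹, X², Y²)` admits
a mechanism-variability `X → Y` representation, then `X¹` and `X²` are (unconditionally)
independent and `Y¹ ⫫ X² | X¹`. -/
theorem markov_of_mechVarRep {Ω E F : Type*} [MeasurableSpace Ω] [StandardBorelSpace Ω]
    [MeasurableSpace E] [StandardBorelSpace E] [MeasurableSpace F] [StandardBorelSpace F]
    (P : Measure Ω) [IsProbabilityMeasure P]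
    (X1 X2 : Ω → E) (Y1 Y2 : Ω → F)
    (hX1 : Measurable X1) (hY1 : Measurable Y1) (hX2 : Measurable X2) (hY2 : Measurable Y2)
    (hrep : HasMechVarRep P X1 Y1 X2 Y2) :
    IndepFun X1 X2 P ∧ CondIndepRV P Y1 X2 X1 hX1 := by
  obtain ⟨Ψ, mΨ, ν, hν, π, hπ, β, hβ, hq⟩ := hrep
  haveI := hν; haveI := hπ; haveI := hβ
  set κ : Kernel Ψ (E × F) := Kernel.const Ψ π ⊗ₖ β with hκdef
  haveI : IsMarkovKernel κ := by rw [hκdef]; infer_instance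
  have hκ : ∀ ψ, κ ψ = jointXY π (fun x => β (ψ, x)) := by
    intro ψ
    have hm : Measurable fun x : E => ((β (ψ, x)).map fun y => (x, y)) := by
      apply Measure.measurable_of_measurable_coe
      intro t ht
      simp_rw [Measure.map_apply measurable_prodMk_left ht]
      exact Kernel.measurable_kernel_prodMk_left
        (κ := β.comap (Prod.mk ψ) measurable_prodMk_left) ht
    ext u hu
    rw [hκdef, Kernel.compProd_apply hu, Kernel.const_apply, jointXY,
      Measure.bind_apply hu hm.aemeasurable]
    refine lintegral_congr fun x => ?_
    rw [Measure.map_apply measurable_prodMk_left hu]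
  set κ' : Kernel Ψ (F × E) := κ.map Prod.swap with hκ'def
  haveI : IsMarkovKernel κ' := by
    rw [hκ'def]; exact Kernel.IsMarkovKernel.map κ measurable_swap
  haveI : IsProbabilityMeasure (ν.bind κ') := myProbBind ν κ'
  have hq' : quadLaw P X1 Y1 X2 Y2 = ν.bind fun ψ => (κ ψ).prod (κ ψ) := by
    have h0 : (fun ψ => (jointXY π fun x => β (ψ, x)).prod (jointXY π fun x => β (ψ, x)))
        = fun ψ => (κ ψ).prod (κ ψ) := by funext ψ; rw [hκ ψ]
    rw [hq, h0]
  have hprodmeas : Measurable fun ψ => (κ ψ).prod (κ ψ) := by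
    have h0 : (fun ψ => (κ ψ).prod (κ ψ)) = fun ψ => (κ ×ₖ κ) ψ := by
      funext ψ; rw [Kernel.prod_apply]
    rw [h0]; exact Kernel.measurable _
  have hfstκ : ∀ ψ, (κ ψ).map Prod.fst = π := by
    intro ψ
    have h1 : Kernel.fst κ ψ = π := by rw [hκdef, Kernel.fst_compProd, Kernel.const_apply]
    rw [← Kernel.fst_apply, h1]
  have hq4 : Measurable fun ω => ((X1 ω, Y1 ω), (X2 ω, Y2 ω)) :=
    (hX1.prodMk hY1).prodMk (hX2.prodMk hY2)
  have hκ'app : ∀ ψ, κ' ψ = (κ ψ).map Prod.swap := by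
    intro ψ; rw [hκ'def, Kernel.map_apply κ measurable_swap]
  have hYX : P.map (fun ω => (Y1 ω, X1 ω)) = ν.bind κ' := by
    have hmf : Measurable fun p : (E × F) × (E × F) => (p.1.2, p.1.1) :=
      measurable_fst.snd.prodMk measurable_fst.fst
    have h1 : P.map (fun ω => (Y1 ω, X1 ω))
        = (quadLaw P X1 Y1 X2 Y2).map fun p => (p.1.2, p.1.1) := by
      rw [quadLaw, Measure.map_map hmf hq4]; rfl
    rw [h1, hq', myMapBind ν hprodmeas hmf]
    congr 1
    funext ψ
    have h2 : (fun p : (E × F) × (E × F) => (p.1.2, p.1.1)) = Prod.swap ∘ Prod.fst := rfl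
    rw [hκ'app ψ, h2, ← Measure.map_map measurable_swap measurable_fst,
      Measure.map_fst_prod, measure_univ, one_smul]
  have hX2m : P.map X2 = π := by
    have hmf : Measurable fun p : (E × F) × (E × F) => p.2.1 := measurable_snd.fst
    have h1 : P.map X2 = (quadLaw P X1 Y1 X2 Y2).map fun p => p.2.1 := by
      rw [quadLaw, Measure.map_map hmf hq4]; rfl
    rw [h1, hq', myMapBind ν hprodmeas hmf]
    have h3 : (fun ψ => (((κ ψ).prod (κ ψ)).map fun p : (E × F) × (E × F) => p.2.1))
        = fun _ => π := by
      funext ψ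
      have h2 : (fun p : (E × F) × (E × F) => p.2.1) = Prod.fst ∘ Prod.snd := rfl
      rw [h2, ← Measure.map_map measurable_fst measurable_snd, Measure.map_snd_prod,
        measure_univ, one_smul, hfstκ]
    rw [h3, Measure.bind_const, measure_univ, one_smul]
  have hbig : P.map (fun ω => ((Y1 ω, X1 ω), X2 ω)) = (ν.bind κ').prod π := by
    have hmf : Measurable fun p : (E × F) × (E × F) => ((p.1.2, p.1.1), p.2.1) :=
      (measurable_fst.snd.prodMk measurable_fst.fst).prodMk measurable_snd.fst
    have h1 : P.map (fun ω => ((Y1 ω, X1 ω), X2 ω))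
        = (quadLaw P X1 Y1 X2 Y2).map fun p => ((p.1.2, p.1.1), p.2.1) := by
      rw [quadLaw, Measure.map_map hmf hq4]; rfl
    rw [h1, hq', myMapBind ν hprodmeas hmf, ← myBindProdConst ν κ' π]
    congr 1
    funext ψ
    have h2 : (fun p : (E × F) × (E × F) => ((p.1.2, p.1.1), p.2.1))
        = Prod.map Prod.swap Prod.fst := rfl
    rw [h2, ← Measure.map_prod_map _ _ measurable_swap measurable_fst, hfstκ, hκ'app ψ]
  have hpairInd : IndepFun (fun ω => (Y1 ω, X1 ω)) X2 P := by
    rw [indepFun_iff_map_prod_eq_prod_map_map (hY1.prodMk hX1).aemeasurable hX2.aemeasurable,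
      hYX, hX2m]
    exact hbig
  refine ⟨?_, ?_⟩
  · exact hpairInd.comp measurable_snd measurable_id
  · exact myCondIndep P hY1 hX2 hX1 hpairInd
end

section
/- Markov property of reverse-direction representations: Suppose the quadruple (X¹, Y¹, X², Y²) admits a Y→X representation. Then X¹ is conditionally independent of Y² given Y¹, and X² is conditionally independent of Y¹ given Y². -/
open MeasureTheory ProbabilityTheory

section AuxKernel

open scoped ENNReal

variable {E F T Ψ : Type*} [MeasurableSpace E] [MeasurableSpace F]
  [MeasurableSpace T] [MeasurableSpace Ψ]

/-- The kernel `(θ, ψ) ↦ law of (X, Y)` with `Y ~ β ψ` and `X | Y = y ~ α (θ, y)`. -/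
noncomputable def revKer (β : Kernel Ψ F) (α : Kernel (T × F) E) : Kernel (T × Ψ) (E × F) :=
  Kernel.swapRight ((β.comap Prod.snd measurable_snd) ⊗ₖ
    (α.comap (fun q : (T × Ψ) × F => (q.1.1, q.2))
      (measurable_fst.fst.prodMk measurable_snd)))

variable (β : Kernel Ψ F) (α : Kernel (T × F) E) [IsMarkovKernel β] [IsMarkovKernel α]

instance : IsMarkovKernel (revKer β α) := by
  unfold revKer; infer_instance

lemma measurable_jointYX_map (p : T × Ψ) :
    Measurable (fun y : F => (α (p.1, y)).map (fun x => (x, y))) := by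
  have h : (fun y : F => (α (p.1, y)).map (fun x => (x, y)))
      = fun y => ((α.comap (fun y : F => (p.1, y))
          (measurable_const.prodMk measurable_id)) ×ₖ Kernel.id) y := by
    funext y
    rw [Kernel.prod_apply, Kernel.comap_apply, Kernel.id_apply, Measure.prod_dirac]
  rw [h]
  exact Kernel.measurable _

lemma revKer_apply_eq (p : T × Ψ) :
    revKer β α p = jointYX (β p.2) (fun y => α (p.1, y)) := by
  ext U hU
  rw [jointYX, Measure.bind_apply hU (measurable_jointYX_map α p).aemeasurable]
  rw [revKer, Kernel.swapRight_apply' _ _ hU]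
  rw [show {p : F × E | p.swap ∈ U} = Prod.swap ⁻¹' U from rfl,
    Kernel.compProd_apply (measurable_swap hU)]
  refine lintegral_congr fun y => ?_
  rw [Kernel.comap_apply, Measure.map_apply measurable_prodMk_right hU]
  rfl

lemma revKer_lintegral_snd (p : T × Ψ) {h : F → ℝ≥0∞} (hh : Measurable h) :
    ∫⁻ e, h e.2 ∂(revKer β α p) = ∫⁻ y, h y ∂(β p.2) := by
  have h1 : (revKer β α p).map Prod.snd = β p.2 := by
    have : (revKer β α).snd = β.comap Prod.snd measurable_snd := by
      rw [revKer, Kernel.snd_swapRight, Kernel.fst_compProd]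
    calc (revKer β α p).map Prod.snd = (revKer β α).snd p := (Kernel.snd_apply _ _).symm
      _ = β p.2 := by rw [this, Kernel.comap_apply]
  rw [← h1, lintegral_map hh measurable_snd]

lemma revKer_prod_set (p : T × Ψ) {s : Set E} {C : Set F}
    (hs : MeasurableSet s) (hC : MeasurableSet C) :
    revKer β α p (s ×ˢ C) = ∫⁻ y in C, α (p.1, y) s ∂(β p.2) := by
  rw [revKer_apply_eq, jointYX, Measure.bind_apply (hs.prod hC)
    (measurable_jointYX_map α p).aemeasurable]
  rw [← lintegral_indicator hC]
  refine lintegral_congr fun y => ?_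
  rw [Measure.map_apply measurable_prodMk_right (hs.prod hC)]
  by_cases hy : y ∈ C
  · rw [Set.indicator_of_mem hy,
      show (fun x => (x, y)) ⁻¹' (s ×ˢ C) = s from by ext x; simp [hy]]
  · rw [Set.indicator_of_notMem hy,
      show (fun x => (x, y)) ⁻¹' (s ×ˢ C) = ∅ from by ext x; simp [hy], measure_empty]

end AuxKernel

section AuxKey

open scoped ENNReal

variable {E F T Ψ : Type*} [MeasurableSpace E] [MeasurableSpace F]
  [MeasurableSpace T] [MeasurableSpace Ψ]
  (β : Kernel Ψ F) (α : Kernel (T × F) E) [IsMarkovKernel β] [IsMarkovKernel α]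
  (μ : Measure T) (ν : Measure Ψ) [IsProbabilityMeasure μ] [IsProbabilityMeasure ν]

set_option maxHeartbeats 1000000 in
lemma revKer_key {s : Set E} {C t : Set F} (hs : MeasurableSet s) (hC : MeasurableSet C)
    (ht : MeasurableSet t) :
    ∫⁻ q, (∫⁻ θ, α (θ, q.1.2) s ∂μ) * C.indicator 1 q.1.2 * t.indicator 1 q.2.2
        ∂((μ.prod ν).bind fun p => ((revKer β α) ×ₖ (revKer β α)) p)
      = (μ.prod ν).bind (fun p => ((revKer β α) ×ₖ (revKer β α)) p)
          ((s ×ˢ C) ×ˢ (Set.univ ×ˢ t)) := by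
  set Φ : F → ℝ≥0∞ := fun y => ∫⁻ θ, α (θ, y) s ∂μ with hΦdef
  have hΦ : Measurable Φ :=
    Measurable.lintegral_prod_right' ((Kernel.measurable_coe α hs).comp measurable_swap)
  have hindC : Measurable (C.indicator (1 : F → ℝ≥0∞)) := measurable_const.indicator hC
  have hindt : Measurable (t.indicator (1 : F → ℝ≥0∞)) := measurable_const.indicator ht
  have hf1 : Measurable fun e : E × F => Φ e.2 * C.indicator 1 e.2 :=
    (hΦ.comp measurable_snd).mul (hindC.comp measurable_snd)
  have hf2 : Measurable fun e : E × F => t.indicator 1 e.2 := hindt.comp measurable_snd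
  have hG : Measurable fun q : (E × F) × (E × F) =>
      Φ q.1.2 * C.indicator 1 q.1.2 * t.indicator 1 q.2.2 :=
    (hf1.comp measurable_fst).mul (hf2.comp measurable_snd)
  rw [Measure.lintegral_bind (Kernel.measurable _).aemeasurable hG.aemeasurable,
    Measure.bind_apply ((hs.prod hC).prod (MeasurableSet.univ.prod ht)) (Kernel.measurable _).aemeasurable]
  have hins : ∀ p : T × Ψ,
      (∫⁻ q, Φ q.1.2 * C.indicator 1 q.1.2 * t.indicator 1 q.2.2
        ∂((revKer β α ×ₖ revKer β α) p))
      = (∫⁻ y in C, Φ y ∂β p.2) * β p.2 t := by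
    intro p
    rw [Kernel.prod_apply, lintegral_prod_mul hf1.aemeasurable hf2.aemeasurable]
    have e1 : ∫⁻ e : E × F, Φ e.2 * C.indicator 1 e.2 ∂(revKer β α p)
        = ∫⁻ y, Φ y * C.indicator 1 y ∂β p.2 :=
      revKer_lintegral_snd β α p (hΦ.mul hindC)
    have e2 : ∫⁻ e : E × F, t.indicator 1 e.2 ∂(revKer β α p)
        = ∫⁻ y, t.indicator 1 y ∂β p.2 :=
      revKer_lintegral_snd β α p hindt
    rw [e1, e2, lintegral_indicator_one ht]
    congr 1
    rw [← lintegral_indicator hC]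
    refine lintegral_congr fun y => ?_
    by_cases hy : y ∈ C <;> simp [hy]
  have hset : ∀ p : T × Ψ,
      ((revKer β α ×ₖ revKer β α) p) ((s ×ˢ C) ×ˢ (Set.univ ×ˢ t))
      = (∫⁻ y in C, α (p.1, y) s ∂β p.2) * β p.2 t := by
    intro p
    rw [Kernel.prod_apply, Measure.prod_prod, revKer_prod_set β α p hs hC,
      revKer_prod_set β α p MeasurableSet.univ ht]
    congr 1
    simp [measure_univ]
  simp only [hins, hset]
  -- reduce to iterated integrals
  have hgψ : Measurable fun ψ : Ψ => (∫⁻ y in C, Φ y ∂β ψ) * β ψ t := by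
    refine Measurable.mul ?_ (Kernel.measurable_coe β ht)
    exact Measurable.setLIntegral_kernel_prod_right (κ := β)
      (f := fun _ y => Φ y) (hΦ.comp measurable_snd) hC
  have hmL : Measurable fun p : T × Ψ => (∫⁻ y in C, Φ y ∂β p.2) * β p.2 t :=
    hgψ.comp measurable_snd
  have hmR : Measurable fun p : T × Ψ => (∫⁻ y in C, α (p.1, y) s ∂β p.2) * β p.2 t := by
    refine Measurable.mul ?_ ((Kernel.measurable_coe β ht).comp measurable_snd)
    have := Measurable.setLIntegral_kernel_prod_right
      (κ := β.comap Prod.snd measurable_snd) (f := fun (p : T × Ψ) y => α (p.1, y) s)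
      ((Kernel.measurable_coe α hs).comp ((measurable_fst.fst).prodMk measurable_snd)) hC
    simpa [Kernel.comap_apply] using this
  have hgψ2 : Measurable fun ψ : Ψ => (∫⁻ y in C, Φ y ∂β ψ) * β ψ t := hgψ
  have hL : ∫⁻ p : T × Ψ, (∫⁻ y in C, Φ y ∂β p.2) * β p.2 t ∂(μ.prod ν)
      = ∫⁻ ψ, (∫⁻ y in C, Φ y ∂β ψ) * β ψ t ∂ν := by
    rw [← lintegral_map hgψ measurable_snd, Measure.map_snd_prod, measure_univ, one_smul]
  have hR : ∫⁻ p : T × Ψ, (∫⁻ y in C, α (p.1, y) s ∂β p.2) * β p.2 t ∂(μ.prod ν)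
      = ∫⁻ ψ, ∫⁻ θ, (∫⁻ y in C, α (θ, y) s ∂β ψ) * β ψ t ∂μ ∂ν :=
    (lintegral_prod _ hmR.aemeasurable).trans
      (lintegral_lintegral_swap hmR.aemeasurable)
  rw [hL, hR]
  refine (lintegral_congr fun ψ => ?_).symm
  have hme : Measurable fun θ : T => ∫⁻ y in C, α (θ, y) s ∂β ψ := by
    have := Measurable.setLIntegral_kernel_prod_right (κ := Kernel.const T (β ψ))
      (f := fun θ y => α (θ, y) s) (Kernel.measurable_coe α hs) hC
    simpa [Kernel.const_apply] using this
  rw [lintegral_mul_const _ hme]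
  congr 1
  exact lintegral_lintegral_swap (Kernel.measurable_coe α hs).aemeasurable

end AuxKey

section AuxMain

open scoped ENNReal

set_option maxHeartbeats 1000000 in
theorem condIndep_left_of_rep {Ω E F : Type*} [MeasurableSpace Ω] [StandardBorelSpace Ω]
    [MeasurableSpace E] [MeasurableSpace F]
    (P : Measure Ω) [IsProbabilityMeasure P]
    {X1 X2 : Ω → E} {Y1 Y2 : Ω → F}
    (hX1 : Measurable X1) (hY1 : Measurable Y1) (hX2 : Measurable X2) (hY2 : Measurable Y2)
    {T Ψ : Type*} [MeasurableSpace T] [MeasurableSpace Ψ]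
    (μ : Measure T) (ν : Measure Ψ) [IsProbabilityMeasure μ] [IsProbabilityMeasure ν]
    (β : Kernel Ψ F) (α : Kernel (T × F) E) [IsMarkovKernel β] [IsMarkovKernel α]
    (heq : P.map (fun ω => ((X1 ω, Y1 ω), (X2 ω, Y2 ω)))
      = (μ.prod ν).bind fun p => ((revKer β α) ×ₖ (revKer β α)) p) :
    ProbabilityTheory.CondIndepFun (MeasurableSpace.comap Y1 inferInstance) hY1.comap_le
      X1 Y2 P := by
  have hquadmeas : Measurable fun ω => ((X1 ω, Y1 ω), (X2 ω, Y2 ω)) :=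
    (hX1.prodMk hY1).prodMk (hX2.prodMk hY2)
  rw [condIndepFun_iff_condExp_inter_preimage_eq_mul hX1 hY2]
  intro s t hs ht
  have hY1m' : Measurable[MeasurableSpace.comap Y1 inferInstance] Y1 :=
    Measurable.of_comap_le le_rfl
  set Φ : F → ℝ≥0∞ := fun y => ∫⁻ θ, α (θ, y) s ∂μ with hΦdef
  have hΦ : Measurable Φ :=
    Measurable.lintegral_prod_right' ((Kernel.measurable_coe α hs).comp measurable_swap)
  have hΦ1 : ∀ y, Φ y ≤ 1 := by
    intro y
    calc ∫⁻ θ, α (θ, y) s ∂μ ≤ ∫⁻ _, 1 ∂μ := lintegral_mono fun θ => prob_le_one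
      _ = 1 := by simp
  have hind1 : ∀ (D : Set F) (y : F), D.indicator (1 : F → ℝ≥0∞) y ≤ 1 := fun D y => by
    by_cases h : y ∈ D <;> simp [h]
  -- the master lintegral identity
  have master : ∀ (C : Set F), MeasurableSet C → ∀ (t' : Set F), MeasurableSet t' →
      ∫⁻ ω, Φ (Y1 ω) * C.indicator 1 (Y1 ω) * t'.indicator 1 (Y2 ω) ∂P
        = P (X1 ⁻¹' s ∩ Y1 ⁻¹' C ∩ Y2 ⁻¹' t') := by
    intro C hC t' ht'
    have hG : Measurable fun q : (E × F) × (E × F) =>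
        Φ q.1.2 * C.indicator 1 q.1.2 * t'.indicator 1 q.2.2 :=
      (((hΦ.comp measurable_snd).mul
          ((measurable_const.indicator hC).comp measurable_snd)).comp measurable_fst).mul
        (((measurable_const.indicator ht').comp measurable_snd).comp measurable_snd)
    have h1 : ∫⁻ ω, Φ (Y1 ω) * C.indicator 1 (Y1 ω) * t'.indicator 1 (Y2 ω) ∂P
        = ∫⁻ q, Φ q.1.2 * C.indicator 1 q.1.2 * t'.indicator 1 q.2.2
            ∂(P.map (fun ω => ((X1 ω, Y1 ω), (X2 ω, Y2 ω)))) :=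
      (lintegral_map hG hquadmeas).symm
    have h2 : P (X1 ⁻¹' s ∩ Y1 ⁻¹' C ∩ Y2 ⁻¹' t')
        = (P.map (fun ω => ((X1 ω, Y1 ω), (X2 ω, Y2 ω)))) ((s ×ˢ C) ×ˢ (Set.univ ×ˢ t')) := by
      rw [Measure.map_apply hquadmeas ((hs.prod hC).prod (MeasurableSet.univ.prod ht'))]
      congr 1
      ext ω
      simp [Set.mem_preimage, and_assoc]
    rw [h1, h2, heq]
    exact revKer_key β α μ ν hs hC ht'
  set φ : F → ℝ := fun y => (Φ y).toReal with hφdef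
  have hφm : Measurable φ := hΦ.ennreal_toReal
  have hφ1 : ∀ y, |φ y| ≤ 1 := by
    intro y
    rw [abs_of_nonneg ENNReal.toReal_nonneg]
    have := ENNReal.toReal_mono ENNReal.one_ne_top (hΦ1 y)
    simpa using this
  -- conversion to real integrals
  have conv : ∀ (C : Set F), MeasurableSet C → ∀ (t' : Set F), MeasurableSet t' →
      ∫ ω, (Y1 ⁻¹' C).indicator (fun ω' => φ (Y1 ω')) ω
          * (Y2 ⁻¹' t').indicator (fun _ => (1 : ℝ)) ω ∂P
        = (P (X1 ⁻¹' s ∩ Y1 ⁻¹' C ∩ Y2 ⁻¹' t')).toReal := by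
    intro C hC t' ht'
    have hpt : ∀ ω, (Y1 ⁻¹' C).indicator (fun ω' => φ (Y1 ω')) ω
        * (Y2 ⁻¹' t').indicator (fun _ => (1 : ℝ)) ω
        = (Φ (Y1 ω) * C.indicator 1 (Y1 ω) * t'.indicator 1 (Y2 ω)).toReal := by
      intro ω
      by_cases h1 : Y1 ω ∈ C <;> by_cases h2 : Y2 ω ∈ t' <;>
        simp [h1, h2, Set.indicator_apply, hφdef, ENNReal.toReal_mul]
    have hmeas : AEMeasurable
        (fun ω => Φ (Y1 ω) * C.indicator 1 (Y1 ω) * t'.indicator 1 (Y2 ω)) P := by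
      exact (((hΦ.comp hY1).mul
        ((measurable_const.indicator hC).comp hY1)).mul
        ((measurable_const.indicator ht').comp hY2)).aemeasurable
    have hlt : ∀ᵐ ω ∂P, Φ (Y1 ω) * C.indicator 1 (Y1 ω) * t'.indicator 1 (Y2 ω) < ⊤ := by
      refine ae_of_all _ fun ω => lt_of_le_of_lt ?_ ENNReal.one_lt_top
      exact mul_le_one' (mul_le_one' (hΦ1 _) (hind1 _ _)) (hind1 _ _)
    calc ∫ ω, (Y1 ⁻¹' C).indicator (fun ω' => φ (Y1 ω')) ω
          * (Y2 ⁻¹' t').indicator (fun _ => (1 : ℝ)) ω ∂P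
        = ∫ ω, (Φ (Y1 ω) * C.indicator 1 (Y1 ω) * t'.indicator 1 (Y2 ω)).toReal ∂P :=
          integral_congr_ae (ae_of_all _ hpt)
      _ = (∫⁻ ω, Φ (Y1 ω) * C.indicator 1 (Y1 ω) * t'.indicator 1 (Y2 ω) ∂P).toReal :=
          integral_toReal hmeas hlt
      _ = (P (X1 ⁻¹' s ∩ Y1 ⁻¹' C ∩ Y2 ⁻¹' t')).toReal := by rw [master C hC t' ht']
  -- Step A : φ ∘ Y1 is a version of the conditional expectation of the X1-indicator
  have stepA : (fun ω => φ (Y1 ω)) =ᵐ[P]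
      MeasureTheory.condExp (MeasurableSpace.comap Y1 inferInstance) P
        ((X1 ⁻¹' s).indicator fun _ => (1 : ℝ)) := by
    refine ae_eq_condExp_of_forall_setIntegral_eq hY1.comap_le
      ((integrable_const (1 : ℝ)).indicator (hX1 hs)) (fun A hA hAfin => ?_)
      (fun A hA hAfin => ?_) ?_
    · exact ((integrable_const (1 : ℝ)).mono' (hφm.comp hY1).aestronglyMeasurable
        (ae_of_all _ fun ω => by simpa [Real.norm_eq_abs] using hφ1 (Y1 ω))).integrableOn
    · obtain ⟨C, hC, rfl⟩ := hA
      have hres : ∫ ω in Y1 ⁻¹' C, φ (Y1 ω) ∂P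
          = (P (X1 ⁻¹' s ∩ Y1 ⁻¹' C)).toReal := by
        have h0 : ∫ ω in Y1 ⁻¹' C, φ (Y1 ω) ∂P
            = ∫ ω, (Y1 ⁻¹' C).indicator (fun ω' => φ (Y1 ω')) ω
                * (Y2 ⁻¹' (Set.univ : Set F)).indicator (fun _ => (1 : ℝ)) ω ∂P := by
          rw [← integral_indicator (hY1 hC)]
          refine integral_congr_ae (ae_of_all _ fun ω => ?_)
          simp
        rw [h0, conv C hC Set.univ MeasurableSet.univ]
        congr 2
        simp
      have hrhs : ∫ ω in Y1 ⁻¹' C, (X1 ⁻¹' s).indicator (fun _ => (1 : ℝ)) ω ∂P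
          = (P (X1 ⁻¹' s ∩ Y1 ⁻¹' C)).toReal := by
        have h1 : ∫ ω in Y1 ⁻¹' C, (X1 ⁻¹' s).indicator (fun _ => (1 : ℝ)) ω ∂P
            = ((P.restrict (Y1 ⁻¹' C)) (X1 ⁻¹' s)).toReal := integral_indicator_one (hX1 hs)
        rw [h1, Measure.restrict_apply (hX1 hs)]
      rw [hres, hrhs]
    · exact ((hφm.comp hY1m').stronglyMeasurable).aestronglyMeasurable
  -- Step B
  have hg0int : Integrable ((Y2 ⁻¹' t).indicator (fun _ => (1 : ℝ))) P :=
    (integrable_const (1 : ℝ)).indicator (hY2 ht)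
  have stepB : (fun ω => φ (Y1 ω)
        * (MeasureTheory.condExp (MeasurableSpace.comap Y1 inferInstance) P
            ((Y2 ⁻¹' t).indicator fun _ => (1 : ℝ))) ω)
      =ᵐ[P] MeasureTheory.condExp (MeasurableSpace.comap Y1 inferInstance) P
          ((X1 ⁻¹' s ∩ Y2 ⁻¹' t).indicator fun _ => (1 : ℝ)) := by
    have hcEsm : StronglyMeasurable[MeasurableSpace.comap Y1 inferInstance]
        (MeasureTheory.condExp (MeasurableSpace.comap Y1 inferInstance) P
          ((Y2 ⁻¹' t).indicator fun _ => (1 : ℝ))) := stronglyMeasurable_condExp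
    have hcEint : Integrable (MeasureTheory.condExp (MeasurableSpace.comap Y1 inferInstance) P
        ((Y2 ⁻¹' t).indicator fun _ => (1 : ℝ))) P := integrable_condExp
    refine ae_eq_condExp_of_forall_setIntegral_eq hY1.comap_le
      ((integrable_const (1 : ℝ)).indicator ((hX1 hs).inter (hY2 ht)))
      (fun A hA hAfin => ?_) (fun A hA hAfin => ?_) ?_
    · refine (hcEint.norm.mono'
        (((hφm.comp hY1).mul (hcEsm.mono hY1.comap_le).measurable).aestronglyMeasurable)
        (ae_of_all _ fun ω => ?_)).integrableOn
      rw [Pi.mul_apply, norm_mul]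
      exact mul_le_of_le_one_left (norm_nonneg _)
        (by simpa [Real.norm_eq_abs] using hφ1 (Y1 ω))
    · obtain ⟨C, hC, rfl⟩ := hA
      have hF0sm : StronglyMeasurable[MeasurableSpace.comap Y1 inferInstance]
          ((Y1 ⁻¹' C).indicator (fun ω => φ (Y1 ω))) :=
        ((hφm.comp hY1m').stronglyMeasurable).indicator ⟨C, hC, rfl⟩
      have hF0meas : Measurable ((Y1 ⁻¹' C).indicator (fun ω => φ (Y1 ω))) :=
        (hφm.comp hY1).indicator (hY1 hC)
      have hF0g0 : Integrable ((Y1 ⁻¹' C).indicator (fun ω => φ (Y1 ω))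
          * (Y2 ⁻¹' t).indicator (fun _ => (1 : ℝ))) P := by
        refine (integrable_const (1 : ℝ)).mono'
          ((hF0meas.mul (measurable_const.indicator (hY2 ht))).aestronglyMeasurable)
          (ae_of_all _ fun ω => ?_)
        rw [Pi.mul_apply, norm_mul]
        have hn1 : ‖(Y1 ⁻¹' C).indicator (fun ω => φ (Y1 ω)) ω‖ ≤ 1 := by
          by_cases h : ω ∈ Y1 ⁻¹' C
          · simpa [h, Real.norm_eq_abs] using hφ1 (Y1 ω)
          · simp [h]
        have hn2 : ‖(Y2 ⁻¹' t).indicator (fun _ => (1 : ℝ)) ω‖ ≤ 1 := by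
          by_cases h : ω ∈ Y2 ⁻¹' t <;> simp [h]
        exact mul_le_one₀ hn1 (norm_nonneg _) hn2
      have hpull := condExp_mul_of_stronglyMeasurable_left
        (m := MeasurableSpace.comap Y1 inferInstance) (μ := P) hF0sm hF0g0 hg0int
      calc ∫ ω in Y1 ⁻¹' C, φ (Y1 ω)
            * (MeasureTheory.condExp (MeasurableSpace.comap Y1 inferInstance) P
                ((Y2 ⁻¹' t).indicator fun _ => (1 : ℝ))) ω ∂P
          = ∫ ω, ((Y1 ⁻¹' C).indicator (fun ω' => φ (Y1 ω'))
              * MeasureTheory.condExp (MeasurableSpace.comap Y1 inferInstance) P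
                  ((Y2 ⁻¹' t).indicator fun _ => (1 : ℝ))) ω ∂P := by
            rw [← integral_indicator (hY1 hC)]
            exact integral_congr_ae (ae_of_all _ fun ω =>
              Set.indicator_mul_left _ _ _)
        _ = ∫ ω, (MeasureTheory.condExp (MeasurableSpace.comap Y1 inferInstance) P
              ((Y1 ⁻¹' C).indicator (fun ω => φ (Y1 ω))
                * (Y2 ⁻¹' t).indicator (fun _ => (1 : ℝ)))) ω ∂P :=
            (integral_congr_ae hpull).symm
        _ = ∫ ω, ((Y1 ⁻¹' C).indicator (fun ω => φ (Y1 ω))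
              * (Y2 ⁻¹' t).indicator (fun _ => (1 : ℝ))) ω ∂P :=
            integral_condExp hY1.comap_le
        _ = (P (X1 ⁻¹' s ∩ Y1 ⁻¹' C ∩ Y2 ⁻¹' t)).toReal := conv C hC t ht
        _ = ∫ ω in Y1 ⁻¹' C, (X1 ⁻¹' s ∩ Y2 ⁻¹' t).indicator (fun _ => (1 : ℝ)) ω ∂P := by
            have h1 : ∫ ω in Y1 ⁻¹' C, (X1 ⁻¹' s ∩ Y2 ⁻¹' t).indicator (fun _ => (1 : ℝ)) ω ∂P
                = ((P.restrict (Y1 ⁻¹' C)) (X1 ⁻¹' s ∩ Y2 ⁻¹' t)).toReal :=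
              integral_indicator_one ((hX1 hs).inter (hY2 ht))
            rw [h1, Measure.restrict_apply ((hX1 hs).inter (hY2 ht)),
              Set.inter_right_comm]
    · exact StronglyMeasurable.aestronglyMeasurable
        (((hφm.comp hY1m').stronglyMeasurable).mul stronglyMeasurable_condExp)
  refine stepB.symm.trans ?_
  filter_upwards [stepA] with ω h
  rw [← h]

end AuxMain

/-- **Markov property of reverse-direction representations.** If the quadruple
`(X¹, Y¹, X², Y²)` admits a `Y → X` representation, then `X¹ ⫫ Y² | Y¹` and `X² ⫫ Y¹ | Y²`. -/
theorem markov_of_revRep {Ω E F : Type*} [MeasurableSpace Ω] [StandardBorelSpace Ω]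
    [MeasurableSpace E] [StandardBorelSpace E] [MeasurableSpace F] [StandardBorelSpace F]
    (P : Measure Ω) [IsProbabilityMeasure P]
    (X1 X2 : Ω → E) (Y1 Y2 : Ω → F)
    (hX1 : Measurable X1) (hY1 : Measurable Y1) (hX2 : Measurable X2) (hY2 : Measurable Y2)
    (hrep : HasRevRep P X1 Y1 X2 Y2) :
    CondIndepRV P X1 Y2 Y1 hY1 ∧ CondIndepRV P X2 Y1 Y2 hY2 := by
  obtain ⟨T, mT, Ψ, mΨ, μ, hμ, ν, hν, β, hβ, α, hα, heq⟩ := hrep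
  haveI := hμ; haveI := hν; haveI := hβ; haveI := hα
  have hfun : (fun p : T × Ψ =>
      (jointYX (β p.2) fun y => α (p.1, y)).prod (jointYX (β p.2) fun y => α (p.1, y)))
      = fun p => ((revKer β α) ×ₖ (revKer β α)) p := by
    funext p
    rw [Kernel.prod_apply, revKer_apply_eq]
  have heq1 : P.map (fun ω => ((X1 ω, Y1 ω), (X2 ω, Y2 ω)))
      = (μ.prod ν).bind fun p => ((revKer β α) ×ₖ (revKer β α)) p := by
    rw [← hfun]; exact heq
  have hq1 : Measurable fun ω => ((X1 ω, Y1 ω), (X2 ω, Y2 ω)) :=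
    (hX1.prodMk hY1).prodMk (hX2.prodMk hY2)
  have hq2 : Measurable fun ω => ((X2 ω, Y2 ω), (X1 ω, Y1 ω)) :=
    (hX2.prodMk hY2).prodMk (hX1.prodMk hY1)
  constructor
  · exact condIndep_left_of_rep P hX1 hY1 hX2 hY2 μ ν β α heq1
  · have hswap : P.map (fun ω => ((X2 ω, Y2 ω), (X1 ω, Y1 ω)))
        = (μ.prod ν).bind fun p => ((revKer β α) ×ₖ (revKer β α)) p := by
      ext U hU
      rw [Measure.map_apply hq2 hU]
      have hpre : (fun ω => ((X2 ω, Y2 ω), (X1 ω, Y1 ω))) ⁻¹' U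
          = (fun ω => ((X1 ω, Y1 ω), (X2 ω, Y2 ω))) ⁻¹' (Prod.swap ⁻¹' U) := rfl
      rw [hpre, ← Measure.map_apply hq1 (measurable_swap hU), heq1,
        Measure.bind_apply (measurable_swap hU) (Kernel.measurable _).aemeasurable,
        Measure.bind_apply hU (Kernel.measurable _).aemeasurable]
      refine lintegral_congr fun p => ?_
      rw [Kernel.prod_apply]
      calc ((revKer β α p).prod (revKer β α p)) (Prod.swap ⁻¹' U)
          = (((revKer β α p).prod (revKer β α p)).map Prod.swap) U :=
            (Measure.map_apply measurable_swap hU).symm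
        _ = ((revKer β α p).prod (revKer β α p)) U := by rw [Measure.prod_swap]
    exact condIndep_left_of_rep P hX2 hY2 hX1 hY1 μ ν β α hswap
end

section
/- Identifiability of the causal direction (sufficiency part of the cause/mechanism-variability theorem): Suppose the quadruple (X¹, Y¹, X², Y²) admits a cause-variability X→Y representation or a mechanism-variability X→Y representation, and suppose X¹ is NOT conditionally independent of Y² given Y¹. Then the joint law of (X¹, Y¹, X², Y²) admits no Y→X representation; in particular, the causal direction X→Y is uniquely determined. -/
open MeasureTheory ProbabilityTheory

open scoped ENNReal

section AuxRev

open ProbabilityTheory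

variable {E F : Type*} [MeasurableSpace E] [MeasurableSpace F]

lemma pair_family_eq (κ : Kernel F E) [IsSFiniteKernel κ] :
    (fun y => (κ y).map (fun x => (x, y))) = ⇑((Kernel.id ×ₖ κ).map Prod.swap) := by
  funext y
  rw [Kernel.map_apply _ measurable_swap, Kernel.prod_apply, Kernel.id_apply,
    Measure.dirac_prod, Measure.map_map measurable_swap measurable_prodMk_left]
  rfl

lemma jointYX_apply_kernel (m : Measure F) (κ : Kernel F E) [IsSFiniteKernel κ]
    {s : Set (E × F)} (hs : MeasurableSet s) :
    jointYX m ⇑κ s = ∫⁻ y, κ y {x | (x, y) ∈ s} ∂m := by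
  rw [jointYX, Measure.bind_apply hs (by rw [pair_family_eq κ]; exact (Kernel.measurable _).aemeasurable)]
  refine lintegral_congr fun y => ?_
  rw [Measure.map_apply measurable_prodMk_right hs]
  rfl

/-- The reverse-representation kernel `p ↦ law of (X, Y)` packaged as a `Kernel`. -/
noncomputable def revK {T Ψ : Type*} [MeasurableSpace T] [MeasurableSpace Ψ]
    (α : Kernel (T × F) E) (β : Kernel Ψ F) : Kernel (T × Ψ) (E × F) :=
  ((β.comap Prod.snd measurable_snd) ⊗ₖ
    (α.comap (fun q => (q.1.1, q.2))
      ((measurable_fst.comp measurable_fst).prodMk measurable_snd))).map Prod.swap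

variable {T Ψ : Type*} [MeasurableSpace T] [MeasurableSpace Ψ]
  (α : Kernel (T × F) E) [IsMarkovKernel α] (β : Kernel Ψ F) [IsMarkovKernel β]

instance : IsMarkovKernel (revK α β) :=
  Kernel.IsMarkovKernel.map _ measurable_swap

lemma revK_eq (p : T × Ψ) :
    jointYX (β p.2) (fun y => α (p.1, y)) = revK α β p := by
  have h1 : (fun y : F => α (p.1, y))
      = ⇑(α.comap (fun y => (p.1, y)) (measurable_const.prodMk measurable_id)) := by
    funext y; rw [Kernel.comap_apply]
  ext A hA
  rw [h1, jointYX_apply_kernel _ _ hA, revK, Kernel.map_apply' _ measurable_swap _ hA,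
    Kernel.compProd_apply (hA.preimage measurable_swap)]
  simp only [Kernel.comap_apply]
  rfl

lemma revK_apply' (p : T × Ψ) {A : Set (E × F)} (hA : MeasurableSet A) :
    revK α β p A = ∫⁻ y, α (p.1, y) {x | (x, y) ∈ A} ∂β p.2 := by
  rw [← revK_eq α β p]
  have h1 : (fun y : F => α (p.1, y))
      = ⇑(α.comap (fun y => (p.1, y)) (measurable_const.prodMk measurable_id)) := by
    funext y; rw [Kernel.comap_apply]
  rw [h1, jointYX_apply_kernel _ _ hA]
  simp only [Kernel.comap_apply]

lemma revK_rect (p : T × Ψ) {s : Set E} {B : Set F}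
    (hs : MeasurableSet s) (hB : MeasurableSet B) :
    revK α β p (s ×ˢ B) = ∫⁻ y in B, α (p.1, y) s ∂β p.2 := by
  rw [revK_apply' α β p (hs.prod hB), ← lintegral_indicator hB]
  refine lintegral_congr fun y => ?_
  by_cases hy : y ∈ B
  · rw [Set.indicator_of_mem hy]
    congr 1; ext x; simp [hy]
  · rw [Set.indicator_of_notMem hy]
    have : {x | (x, y) ∈ s ×ˢ B} = (∅ : Set E) := by ext x; simp [hy]
    rw [this]; exact measure_empty

end AuxRev
/-- **Identifiability of the causal direction** (sufficiency part of the
cause/mechanism-variability theorem). If the quadruple `(X¹, Y¹, X², Y²)` admits a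
cause-variability or a mechanism-variability `X → Y` representation, and `X¹` is *not*
conditionally independent of `Y²` given `Y¹`, then the joint law admits no `Y → X`
representation: the causal direction `X → Y` is uniquely determined. -/
theorem no_revRep_of_varRep {Ω E F : Type*} [MeasurableSpace Ω] [StandardBorelSpace Ω]
    [MeasurableSpace E] [StandardBorelSpace E] [MeasurableSpace F] [StandardBorelSpace F]
    (P : Measure Ω) [IsProbabilityMeasure P]
    (X1 X2 : Ω → E) (Y1 Y2 : Ω → F)
    (hX1 : Measurable X1) (hY1 : Measurable Y1) (hX2 : Measurable X2) (hY2 : Measurable Y2)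
    (hrep : HasCauseVarRep P X1 Y1 X2 Y2 ∨ HasMechVarRep P X1 Y1 X2 Y2)
    (hdep : ¬ CondIndepRV P X1 Y2 Y1 hY1) :
    ¬ HasRevRep P X1 Y1 X2 Y2 := by
  rintro ⟨T, mT, Ψ, mΨ, μ, hμ, ν, hν, β, hβ, α, hα, hΛ⟩
  apply hdep
  unfold CondIndepRV
  rw [condIndepFun_iff_condExp_inter_preimage_eq_mul hX1 hY2]
  intro s t hs ht
  have hfun : (fun p : T × Ψ =>
      (jointYX (β p.2) fun y => α (p.1, y)).prod (jointYX (β p.2) fun y => α (p.1, y)))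
      = ⇑(revK α β ×ₖ revK α β) := by
    funext p
    rw [Kernel.prod_apply, revK_eq α β p]
  rw [hfun] at hΛ
  set Z : Ω → (E × F) × (E × F) := fun ω => ((X1 ω, Y1 ω), (X2 ω, Y2 ω)) with hZdef
  have hZ : Measurable Z := (hX1.prodMk hY1).prodMk (hX2.prodMk hY2)
  have hP : ∀ (A₁ A₂ : Set (E × F)), MeasurableSet A₁ → MeasurableSet A₂ →
      P (Z ⁻¹' (A₁ ×ˢ A₂)) = ∫⁻ p, revK α β p A₁ * revK α β p A₂ ∂(μ.prod ν) := by
    intro A₁ A₂ h1 h2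
    have h3 : P (Z ⁻¹' (A₁ ×ˢ A₂)) = quadLaw P X1 Y1 X2 Y2 (A₁ ×ˢ A₂) := by
      rw [quadLaw, Measure.map_apply hZ (h1.prod h2)]
    rw [h3, hΛ, Measure.bind_apply (h1.prod h2) (Kernel.measurable _).aemeasurable]
    refine lintegral_congr fun p => ?_
    rw [Kernel.prod_apply, Measure.prod_prod]
  have hkey : ∀ (s' : Set E) (B : Set F) (t' : Set F), MeasurableSet s' → MeasurableSet B →
      MeasurableSet t' →
      P ((X1 ⁻¹' s' ∩ Y1 ⁻¹' B) ∩ Y2 ⁻¹' t')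
        = ∫⁻ ψ, (∫⁻ y in B, (∫⁻ θ, α (θ, y) s' ∂μ) ∂β ψ) * β ψ t' ∂ν := by
    intro s' B t' hs' hB ht'
    have hpre : Z ⁻¹' ((s' ×ˢ B) ×ˢ (Set.univ ×ˢ t')) = (X1 ⁻¹' s' ∩ Y1 ⁻¹' B) ∩ Y2 ⁻¹' t' := by
      ext ω; simp [hZdef, and_assoc]
    rw [← hpre, hP _ _ (hs'.prod hB) (MeasurableSet.univ.prod ht')]
    have hm1 : Measurable fun p : T × Ψ => revK α β p (s' ×ˢ B) * β p.2 t' :=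
      (Kernel.measurable_coe _ (hs'.prod hB)).mul
        ((Kernel.measurable_coe β ht').comp measurable_snd)
    calc ∫⁻ p, revK α β p (s' ×ˢ B) * revK α β p (Set.univ ×ˢ t') ∂(μ.prod ν)
        = ∫⁻ p, revK α β p (s' ×ˢ B) * β p.2 t' ∂(μ.prod ν) := by
          refine lintegral_congr fun p => ?_
          congr 1
          rw [revK_apply' α β p (MeasurableSet.univ.prod ht')]
          calc ∫⁻ y, α (p.1, y) {x | (x, y) ∈ Set.univ ×ˢ t'} ∂β p.2
              = ∫⁻ y, t'.indicator (fun _ => 1) y ∂β p.2 := by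
                refine lintegral_congr fun y => ?_
                by_cases hy : y ∈ t'
                · rw [Set.indicator_of_mem hy]
                  have h4 : {x : E | (x, y) ∈ Set.univ ×ˢ t'} = Set.univ := by ext x; simp [hy]
                  rw [h4, measure_univ]
                · rw [Set.indicator_of_notMem hy]
                  have h4 : {x : E | (x, y) ∈ Set.univ ×ˢ t'} = ∅ := by ext x; simp [hy]
                  rw [h4, measure_empty]
            _ = β p.2 t' := by rw [lintegral_indicator ht', setLIntegral_one]
      _ = ∫⁻ θ, ∫⁻ ψ, revK α β (θ, ψ) (s' ×ˢ B) * β ψ t' ∂ν ∂μ :=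
          lintegral_prod _ hm1.aemeasurable
      _ = ∫⁻ ψ, ∫⁻ θ, revK α β (θ, ψ) (s' ×ˢ B) * β ψ t' ∂μ ∂ν :=
          lintegral_lintegral_swap hm1.aemeasurable
      _ = ∫⁻ ψ, (∫⁻ θ, revK α β (θ, ψ) (s' ×ˢ B) ∂μ) * β ψ t' ∂ν := by
          refine lintegral_congr fun ψ => ?_
          have hmθ : Measurable (fun θ : T => revK α β (θ, ψ) (s' ×ˢ B)) :=
            (Kernel.measurable_coe _ (hs'.prod hB)).comp measurable_prodMk_right
          rw [lintegral_mul_const _ hmθ]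
      _ = ∫⁻ ψ, (∫⁻ y in B, (∫⁻ θ, α (θ, y) s' ∂μ) ∂β ψ) * β ψ t' ∂ν := by
          refine lintegral_congr fun ψ => ?_
          congr 1
          calc ∫⁻ θ, revK α β (θ, ψ) (s' ×ˢ B) ∂μ
              = ∫⁻ θ, ∫⁻ y in B, α (θ, y) s' ∂β ψ ∂μ := by
                refine lintegral_congr fun θ => ?_
                rw [revK_rect α β _ hs' hB]
            _ = ∫⁻ y in B, ∫⁻ θ, α (θ, y) s' ∂μ ∂β ψ :=
                lintegral_lintegral_swap (Kernel.measurable_coe α hs').aemeasurable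
  -- specializations of the key identity
  have hPB : ∀ B : Set F, MeasurableSet B → P (Y1 ⁻¹' B) = ∫⁻ ψ, β ψ B ∂ν := by
    intro B hB
    have h := hkey Set.univ B Set.univ MeasurableSet.univ hB MeasurableSet.univ
    simpa [measure_univ, lintegral_one, setLIntegral_one] using h
  have hPsB : ∀ B : Set F, MeasurableSet B → P (X1 ⁻¹' s ∩ Y1 ⁻¹' B)
      = ∫⁻ ψ, ∫⁻ y in B, (∫⁻ θ, α (θ, y) s ∂μ) ∂β ψ ∂ν := by
    intro B hB
    have h := hkey s B Set.univ hs hB MeasurableSet.univ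
    simpa [measure_univ] using h
  have hPBt : ∀ B : Set F, MeasurableSet B → P (Y2 ⁻¹' t ∩ Y1 ⁻¹' B)
      = ∫⁻ ψ, β ψ B * β ψ t ∂ν := by
    intro B hB
    have h := hkey Set.univ B t MeasurableSet.univ hB ht
    rw [Set.inter_comm]
    simp only [Set.preimage_univ, Set.univ_inter] at h
    rw [h]
    refine lintegral_congr fun ψ => ?_
    congr 1
    simp [measure_univ, lintegral_one, setLIntegral_one]
  have hPsBt : ∀ B : Set F, MeasurableSet B →
      P ((X1 ⁻¹' s ∩ Y2 ⁻¹' t) ∩ Y1 ⁻¹' B)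
        = ∫⁻ ψ, (∫⁻ y in B, (∫⁻ θ, α (θ, y) s ∂μ) ∂β ψ) * β ψ t ∂ν := by
    intro B hB
    rw [Set.inter_right_comm]
    exact hkey s B t hs hB ht
  -- abbreviation for the posterior-averaged kernel density
  set ftil : F → ℝ≥0∞ := fun y => ∫⁻ θ, α (θ, y) s ∂μ with hftil
  have hf1 : Measurable ftil := by
    rw [hftil]
    exact Measurable.lintegral_prod_right' ((Kernel.measurable_coe α hs).comp measurable_swap)
  have hfle : ∀ y, ftil y ≤ 1 := fun y => by
    rw [hftil]
    exact le_trans (lintegral_mono fun θ => prob_le_one) (by simp)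
  -- the law of Y1
  obtain ⟨lam, hlam⟩ : ∃ m : Measure F, m = ν.bind ⇑β := ⟨_, rfl⟩
  have hlam_apply : ∀ {B : Set F}, MeasurableSet B → lam B = ∫⁻ ψ, β ψ B ∂ν := by
    intro B hB
    rw [hlam, Measure.bind_apply hB (Kernel.measurable β).aemeasurable]
  have hlam_lint : ∀ {h : F → ℝ≥0∞}, Measurable h →
      ∫⁻ y, h y ∂lam = ∫⁻ ψ, ∫⁻ y, h y ∂β ψ ∂ν := by
    intro h hh
    rw [hlam, Measure.lintegral_bind (Kernel.measurable β).aemeasurable hh.aemeasurable]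
  haveI hlamprob : IsProbabilityMeasure lam := ⟨by rw [hlam_apply MeasurableSet.univ]; simp⟩
  have hmap : P.map Y1 = lam := by
    ext B hB
    rw [Measure.map_apply hY1 hB, hlam_apply hB, hPB B hB]
  -- the sub-probability measure B ↦ P(Y1 ∈ B, Y2 ∈ t)
  obtain ⟨κt, hκt⟩ : ∃ k : Kernel Ψ F,
      k = Kernel.fst ((β ×ₖ β).restrict (MeasurableSet.univ.prod ht)) := ⟨_, rfl⟩
  have hκt_lint : ∀ (ψ : Ψ) {h : F → ℝ≥0∞}, Measurable h →
      ∫⁻ y, h y ∂κt ψ = (∫⁻ y, h y ∂β ψ) * β ψ t := by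
    intro ψ h hh
    rw [hκt, Kernel.fst_apply, Kernel.restrict_apply, lintegral_map hh measurable_fst,
      Kernel.prod_apply, ← Measure.prod_restrict, Measure.restrict_univ]
    have hfm : AEMeasurable (fun z : F × F => h z.1) ((β ψ).prod ((β ψ).restrict t)) :=
      (hh.comp measurable_fst).aemeasurable
    rw [lintegral_prod _ hfm]
    simp only [lintegral_const, Measure.restrict_apply_univ]
    rw [lintegral_mul_const _ hh]
  obtain ⟨lamt, hlamt⟩ : ∃ m : Measure F, m = ν.bind ⇑κt := ⟨_, rfl⟩
  have hlamt_lint : ∀ {h : F → ℝ≥0∞}, Measurable h →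
      ∫⁻ y, h y ∂lamt = ∫⁻ ψ, (∫⁻ y, h y ∂β ψ) * β ψ t ∂ν := by
    intro h hh
    rw [hlamt, Measure.lintegral_bind (Kernel.measurable κt).aemeasurable hh.aemeasurable]
    exact lintegral_congr fun ψ => hκt_lint ψ hh
  have hlamt_apply : ∀ {B : Set F}, MeasurableSet B →
      lamt B = ∫⁻ ψ, β ψ B * β ψ t ∂ν := by
    intro B hB
    rw [← lintegral_indicator_one hB, hlamt_lint (measurable_one.indicator hB)]
    exact lintegral_congr fun ψ => by rw [lintegral_indicator_one hB]
  haveI hfinlamt : IsFiniteMeasure lamt := by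
    constructor
    rw [hlamt_apply MeasurableSet.univ]
    calc ∫⁻ ψ, β ψ Set.univ * β ψ t ∂ν
        ≤ ∫⁻ _, 1 ∂ν := lintegral_mono fun ψ => by
          simpa [measure_univ, one_mul] using (prob_le_one : β ψ t ≤ 1)
      _ < ⊤ := by simp
  have hac : lamt ≪ lam := by
    refine Measure.AbsolutelyContinuous.mk fun B hB h0 => ?_
    rw [hlam_apply hB] at h0
    rw [hlamt_apply hB]
    refine le_antisymm (le_trans (lintegral_mono fun ψ => ?_) h0.le) zero_le
    exact le_trans (mul_le_mul_right prob_le_one _) (le_of_eq (mul_one _))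
  have hgm : Measurable (lamt.rnDeriv lam) := Measure.measurable_rnDeriv _ _
  have hwd : lam.withDensity (lamt.rnDeriv lam) = lamt :=
    Measure.withDensity_rnDeriv_eq lamt lam hac
  have hgfin : ∀ᵐ y ∂lam, lamt.rnDeriv lam y < ∞ := Measure.rnDeriv_lt_top lamt lam
  -- set-lintegral identities over lam
  have hL1 : ∀ {B : Set F}, MeasurableSet B →
      ∫⁻ y in B, ftil y ∂lam = ∫⁻ ψ, ∫⁻ y in B, ftil y ∂β ψ ∂ν := by
    intro B hB
    rw [← lintegral_indicator hB, hlam_lint (hf1.indicator hB)]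
    exact lintegral_congr fun ψ => by rw [lintegral_indicator hB]
  have hL2 : ∀ {B : Set F}, MeasurableSet B →
      ∫⁻ y in B, lamt.rnDeriv lam y ∂lam = lamt B := by
    intro B hB
    rw [← withDensity_apply _ hB, hwd]
  have hL3 : ∀ {B : Set F}, MeasurableSet B →
      ∫⁻ y in B, ftil y * lamt.rnDeriv lam y ∂lam
        = ∫⁻ ψ, (∫⁻ y in B, ftil y ∂β ψ) * β ψ t ∂ν := by
    intro B hB
    have h1 : ∫⁻ y in B, ftil y ∂lamt = ∫⁻ y in B, ftil y * lamt.rnDeriv lam y ∂lam := by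
      conv_lhs => rw [← hwd]
      rw [restrict_withDensity hB, lintegral_withDensity_eq_lintegral_mul _ hgm hf1]
      exact lintegral_congr fun y => mul_comm _ _
    rw [← h1, ← lintegral_indicator hB, hlamt_lint (hf1.indicator hB)]
    exact lintegral_congr fun ψ => by rw [lintegral_indicator hB]
  -- Bochner-integral transfer
  have htrans : ∀ (c : F → ℝ≥0∞), Measurable c → (∀ᵐ y ∂lam, c y < ∞) →
      ∀ B : Set F, MeasurableSet B →
      ∫ ω in Y1 ⁻¹' B, (c (Y1 ω)).toReal ∂P = (∫⁻ y in B, c y ∂lam).toReal := by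
    intro c hc hfin B hB
    have h1 : ∫ ω in Y1 ⁻¹' B, (c (Y1 ω)).toReal ∂P
        = ∫ y, (c y).toReal ∂((P.restrict (Y1 ⁻¹' B)).map Y1) :=
      (integral_map hY1.aemeasurable hc.ennreal_toReal.aestronglyMeasurable).symm
    rw [h1, ← Measure.restrict_map hY1 hB, hmap]
    exact integral_toReal hc.aemeasurable.restrict (ae_restrict_of_ae hfin)
  have hind : ∀ (S : Set Ω), MeasurableSet S → ∀ B : Set F, MeasurableSet B →
      ∫ ω in Y1 ⁻¹' B, S.indicator (fun _ => (1 : ℝ)) ω ∂P = (P (S ∩ Y1 ⁻¹' B)).toReal := by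
    intro S hS B hB
    rw [setIntegral_indicator hS, setIntegral_const, smul_eq_mul, mul_one, Set.inter_comm]
    rfl
  have hint : ∀ (c : F → ℝ≥0∞), Measurable c → (∫⁻ y, c y ∂lam ≠ ⊤) →
      Integrable (fun ω => (c (Y1 ω)).toReal) P := by
    intro c hc hfin
    refine integrable_toReal_of_lintegral_ne_top (hc.comp hY1).aemeasurable ?_
    rwa [← lintegral_map hc hY1, hmap]
  have hsm : ∀ (c : F → ℝ), Measurable c →
      AEStronglyMeasurable[MeasurableSpace.comap Y1 inferInstance] (fun ω => c (Y1 ω)) P :=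
    fun c hc => StronglyMeasurable.aestronglyMeasurable
      (Measurable.stronglyMeasurable (hc.comp (comap_measurable Y1)))
  haveI : SigmaFinite (P.trim hY1.comap_le) := by infer_instance
  -- versions of the three conditional expectations
  have hcond : ∀ (S : Set Ω), MeasurableSet S → ∀ (c : F → ℝ≥0∞), Measurable c →
      (∀ᵐ y ∂lam, c y < ∞) → (∫⁻ y, c y ∂lam ≠ ⊤) →
      (∀ B : Set F, MeasurableSet B → ∫⁻ y in B, c y ∂lam = P (S ∩ Y1 ⁻¹' B)) →
      (fun ω => (c (Y1 ω)).toReal)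
        =ᵐ[P] P⟦S | MeasurableSpace.comap Y1 inferInstance⟧ := by
    intro S hS c hc hfin hlint heq
    refine ae_eq_condExp_of_forall_setIntegral_eq hY1.comap_le
      ((integrable_const (1 : ℝ)).indicator hS) (fun A hA _ => (hint c hc hlint).integrableOn)
      (fun A hA _ => ?_) (hsm _ hc.ennreal_toReal)
    obtain ⟨B, hB, rfl⟩ := hA
    rw [htrans c hc hfin B hB, hind S hS B hB, heq B hB]
  have hrnlint : ∫⁻ y, lamt.rnDeriv lam y ∂lam = lamt Set.univ := by
    rw [← setLIntegral_univ, hL2 MeasurableSet.univ]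
  have h1 := hcond (X1 ⁻¹' s) (hX1 hs) ftil hf1
    (Filter.Eventually.of_forall fun y => lt_of_le_of_lt (hfle y) ENNReal.one_lt_top)
    (by
      refine ne_top_of_le_ne_top ENNReal.one_ne_top (le_trans (lintegral_mono hfle) ?_)
      simp)
    (fun B hB => (hL1 hB).trans (hPsB B hB).symm)
  have h2 := hcond (Y2 ⁻¹' t) (hY2 ht) (lamt.rnDeriv lam) hgm hgfin
    (by rw [hrnlint]; exact measure_ne_top _ _)
    (fun B hB => (hL2 hB).trans ((hlamt_apply hB).trans (hPBt B hB).symm))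
  have h3 := hcond (X1 ⁻¹' s ∩ Y2 ⁻¹' t) ((hX1 hs).inter (hY2 ht))
    (fun y => ftil y * lamt.rnDeriv lam y) (hf1.mul hgm)
    (by
      filter_upwards [hgfin] with y hy
      exact ENNReal.mul_lt_top (lt_of_le_of_lt (hfle y) ENNReal.one_lt_top) hy)
    (by
      have hle : ∫⁻ y, ftil y * lamt.rnDeriv lam y ∂lam ≤ lamt Set.univ := by
        rw [← hrnlint]
        refine le_trans (lintegral_mono fun y => mul_le_mul_left (hfle y) _) ?_
        exact le_of_eq (lintegral_congr fun y => one_mul _)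
      exact ne_top_of_le_ne_top (measure_ne_top _ _) hle)
    (fun B hB => (hL3 hB).trans (hPsBt B hB).symm)
  filter_upwards [h1, h2, h3] with ω e1 e2 e3
  rw [← e1, ← e2, ← e3]
  exact ENNReal.toReal_mul
end

section
/- Non-degeneracy of cause variability: There exist a probability space and Bool-valued random variables X¹, Y¹, X², Y² whose joint law admits a cause-variability X→Y representation (with E = F = Bool), yet X¹ is not conditionally independent of Y² given Y¹. Consequently this joint law admits no Y→X representation. -/
open MeasureTheory ProbabilityTheory

open scoped ENNReal NNReal

namespace CVX

abbrev Q : Type := (Bool × Bool) × (Bool × Bool)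

noncomputable def betaM (x : Bool) : Measure Bool :=
  ((3/4 : ℝ≥0) : ℝ≥0∞) • Measure.dirac x + ((1/4 : ℝ≥0) : ℝ≥0∞) • Measure.dirac (!x)

instance (x : Bool) : IsProbabilityMeasure (betaM x) := by
  constructor
  simp only [betaM, Measure.add_apply, Measure.smul_apply, smul_eq_mul,
    measure_univ, mul_one]
  norm_cast
  apply NNReal.coe_injective; push_cast; norm_num

noncomputable def betaK : Kernel Bool Bool := Kernel.ofFunOfCountable betaM

lemma betaK_apply (x : Bool) : betaK x = betaM x := rfl

instance : IsMarkovKernel betaK := ⟨fun x => by rw [betaK_apply]; infer_instance⟩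

noncomputable def mu0 : Measure Bool :=
  ((1/2 : ℝ≥0) : ℝ≥0∞) • Measure.dirac true + ((1/2 : ℝ≥0) : ℝ≥0∞) • Measure.dirac false

instance : IsProbabilityMeasure mu0 := by
  constructor
  simp only [mu0, Measure.add_apply, Measure.smul_apply, smul_eq_mul, measure_univ, mul_one]
  norm_cast
  apply NNReal.coe_injective; push_cast; norm_num

noncomputable def P : Measure Q :=
  mu0.bind fun θ => (jointXY ((Kernel.id : Kernel Bool Bool) θ) fun x => betaK x).prod
    (jointXY ((Kernel.id : Kernel Bool Bool) θ) fun x => betaK x)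

noncomputable def nu2m (θ : Bool) : Measure (Bool × Bool) :=
  ((3/4 : ℝ≥0) : ℝ≥0∞) • Measure.dirac (θ, θ) + ((1/4 : ℝ≥0) : ℝ≥0∞) • Measure.dirac (θ, !θ)

instance (θ : Bool) : IsProbabilityMeasure (nu2m θ) := by
  constructor
  simp only [nu2m, Measure.add_apply, Measure.smul_apply, smul_eq_mul, measure_univ, mul_one]
  norm_cast
  apply NNReal.coe_injective; push_cast; norm_num

lemma jointXY_dirac (θ : Bool) :
    jointXY ((Kernel.id : Kernel Bool Bool) θ) (fun x => betaK x) = nu2m θ := by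
  rw [jointXY, Kernel.id_apply, Measure.dirac_bind Measurable.of_discrete, betaK_apply, betaM,
    Measure.map_add _ _ Measurable.of_discrete, Measure.map_smul, Measure.map_smul,
    Measure.map_dirac' Measurable.of_discrete, Measure.map_dirac' Measurable.of_discrete, nu2m]

/-- value of the one-sample joint law given θ -/
noncomputable def nuv (θ : Bool) (s : Set (Bool × Bool)) : ℝ≥0∞ :=
  ((3/4 : ℝ≥0) : ℝ≥0∞) * s.indicator 1 (θ, θ) + ((1/4 : ℝ≥0) : ℝ≥0∞) * s.indicator 1 (θ, !θ)

lemma nu2m_apply (θ : Bool) (s : Set (Bool × Bool)) : nu2m θ s = nuv θ s := by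
  rw [nu2m, Measure.add_apply, Measure.smul_apply, Measure.smul_apply,
    Measure.dirac_apply' _ MeasurableSet.of_discrete,
    Measure.dirac_apply' _ MeasurableSet.of_discrete, nuv]
  simp [smul_eq_mul]

lemma P_rect (s t : Set (Bool × Bool)) :
    P (s ×ˢ t) = ((1/2 : ℝ≥0) : ℝ≥0∞) * (nuv true s * nuv true t)
      + ((1/2 : ℝ≥0) : ℝ≥0∞) * (nuv false s * nuv false t) := by
  rw [P]
  simp only [jointXY_dirac]
  rw [Measure.bind_apply MeasurableSet.of_discrete Measurable.of_discrete.aemeasurable]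
  rw [mu0, lintegral_add_measure, lintegral_smul_measure, lintegral_smul_measure,
    lintegral_dirac, lintegral_dirac, Measure.prod_prod, Measure.prod_prod,
    nu2m_apply, nu2m_apply, nu2m_apply, nu2m_apply, smul_eq_mul, smul_eq_mul]

lemma nuv_eq (θ : Bool) (s : Set (Bool × Bool)) (c1 c2 : ℝ≥0)
    (h1 : s.indicator 1 (θ, θ) = (c1 : ℝ≥0∞)) (h2 : s.indicator 1 (θ, !θ) = (c2 : ℝ≥0∞)) :
    nuv θ s = ((3/4 * c1 + 1/4 * c2 : ℝ≥0) : ℝ≥0∞) := by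
  rw [nuv, h1, h2]
  push_cast
  ring

lemma P_val (s t : Set (Bool × Bool)) (c1 c2 d1 d2 v : ℝ≥0)
    (h1 : nuv true s = (c1 : ℝ≥0∞)) (h2 : nuv true t = (c2 : ℝ≥0∞))
    (h3 : nuv false s = (d1 : ℝ≥0∞)) (h4 : nuv false t = (d2 : ℝ≥0∞))
    (hv : (1/2 * (c1 * c2) + 1/2 * (d1 * d2) : ℝ≥0) = v) :
    P (s ×ˢ t) = (v : ℝ≥0∞) := by
  rw [P_rect, h1, h2, h3, h4, ← hv]
  push_cast
  ring

instance : IsProbabilityMeasure P := by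
  constructor
  have h : (Set.univ : Set Q) = (Set.univ : Set (Bool×Bool)) ×ˢ (Set.univ : Set (Bool×Bool)) := by
    simp
  rw [h, P_val _ _ (3/4*1+1/4*1) (3/4*1+1/4*1) (3/4*1+1/4*1) (3/4*1+1/4*1) 1
    (nuv_eq _ _ 1 1 (by simp) (by simp)) (nuv_eq _ _ 1 1 (by simp) (by simp))
    (nuv_eq _ _ 1 1 (by simp) (by simp)) (nuv_eq _ _ 1 1 (by simp) (by simp))
    (by apply NNReal.coe_injective; push_cast; norm_num), ENNReal.coe_one]

/-! Numeric values of `P` on the rectangles we need. -/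

lemma P_R1 : P ((({true} : Set Bool) ×ˢ ({true} : Set Bool)) ×ˢ (Set.univ ×ˢ ({true} : Set Bool)))
    = ((9/32 : ℝ≥0) : ℝ≥0∞) :=
  P_val _ _ (3/4*1+1/4*0) (3/4*1+1/4*0) (3/4*0+1/4*0) (3/4*0+1/4*1) (9/32)
    (nuv_eq _ _ 1 0 (by simp) (by simp)) (nuv_eq _ _ 1 0 (by simp) (by simp))
    (nuv_eq _ _ 0 0 (by simp) (by simp)) (nuv_eq _ _ 0 1 (by simp) (by simp))
    (by apply NNReal.coe_injective; push_cast; norm_num)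

lemma P_R2 : P ((({true} : Set Bool) ×ˢ ({true} : Set Bool)) ×ˢ (Set.univ : Set (Bool × Bool)))
    = ((3/8 : ℝ≥0) : ℝ≥0∞) :=
  P_val _ _ (3/4*1+1/4*0) (3/4*1+1/4*1) (3/4*0+1/4*0) (3/4*1+1/4*1) (3/8)
    (nuv_eq _ _ 1 0 (by simp) (by simp)) (nuv_eq _ _ 1 1 (by simp) (by simp))
    (nuv_eq _ _ 0 0 (by simp) (by simp)) (nuv_eq _ _ 1 1 (by simp) (by simp))
    (by apply NNReal.coe_injective; push_cast; norm_num)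

lemma P_R3 : P (((Set.univ : Set Bool) ×ˢ ({true} : Set Bool)) ×ˢ (Set.univ ×ˢ ({true} : Set Bool)))
    = ((5/16 : ℝ≥0) : ℝ≥0∞) :=
  P_val _ _ (3/4*1+1/4*0) (3/4*1+1/4*0) (3/4*0+1/4*1) (3/4*0+1/4*1) (5/16)
    (nuv_eq _ _ 1 0 (by simp) (by simp)) (nuv_eq _ _ 1 0 (by simp) (by simp))
    (nuv_eq _ _ 0 1 (by simp) (by simp)) (nuv_eq _ _ 0 1 (by simp) (by simp))
    (by apply NNReal.coe_injective; push_cast; norm_num)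

lemma P_R4 : P (((Set.univ : Set Bool) ×ˢ ({true} : Set Bool)) ×ˢ (Set.univ : Set (Bool × Bool)))
    = ((1/2 : ℝ≥0) : ℝ≥0∞) :=
  P_val _ _ (3/4*1+1/4*0) (3/4*1+1/4*1) (3/4*0+1/4*1) (3/4*1+1/4*1) (1/2)
    (nuv_eq _ _ 1 0 (by simp) (by simp)) (nuv_eq _ _ 1 1 (by simp) (by simp))
    (nuv_eq _ _ 0 1 (by simp) (by simp)) (nuv_eq _ _ 1 1 (by simp) (by simp))
    (by apply NNReal.coe_injective; push_cast; norm_num)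

lemma P_R1' : P ((({true} : Set Bool) ×ˢ ({false} : Set Bool)) ×ˢ (Set.univ ×ˢ ({true} : Set Bool)))
    = ((3/32 : ℝ≥0) : ℝ≥0∞) :=
  P_val _ _ (3/4*0+1/4*1) (3/4*1+1/4*0) (3/4*0+1/4*0) (3/4*0+1/4*1) (3/32)
    (nuv_eq _ _ 0 1 (by simp) (by simp)) (nuv_eq _ _ 1 0 (by simp) (by simp))
    (nuv_eq _ _ 0 0 (by simp) (by simp)) (nuv_eq _ _ 0 1 (by simp) (by simp))
    (by apply NNReal.coe_injective; push_cast; norm_num)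

lemma P_R2' : P ((({true} : Set Bool) ×ˢ ({false} : Set Bool)) ×ˢ (Set.univ : Set (Bool × Bool)))
    = ((1/8 : ℝ≥0) : ℝ≥0∞) :=
  P_val _ _ (3/4*0+1/4*1) (3/4*1+1/4*1) (3/4*0+1/4*0) (3/4*1+1/4*1) (1/8)
    (nuv_eq _ _ 0 1 (by simp) (by simp)) (nuv_eq _ _ 1 1 (by simp) (by simp))
    (nuv_eq _ _ 0 0 (by simp) (by simp)) (nuv_eq _ _ 1 1 (by simp) (by simp))
    (by apply NNReal.coe_injective; push_cast; norm_num)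

lemma P_R3' : P (((Set.univ : Set Bool) ×ˢ ({false} : Set Bool)) ×ˢ (Set.univ ×ˢ ({true} : Set Bool)))
    = ((3/16 : ℝ≥0) : ℝ≥0∞) :=
  P_val _ _ (3/4*0+1/4*1) (3/4*1+1/4*0) (3/4*1+1/4*0) (3/4*0+1/4*1) (3/16)
    (nuv_eq _ _ 0 1 (by simp) (by simp)) (nuv_eq _ _ 1 0 (by simp) (by simp))
    (nuv_eq _ _ 1 0 (by simp) (by simp)) (nuv_eq _ _ 0 1 (by simp) (by simp))
    (by apply NNReal.coe_injective; push_cast; norm_num)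

lemma P_R4' : P (((Set.univ : Set Bool) ×ˢ ({false} : Set Bool)) ×ˢ (Set.univ : Set (Bool × Bool)))
    = ((1/2 : ℝ≥0) : ℝ≥0∞) :=
  P_val _ _ (3/4*0+1/4*1) (3/4*1+1/4*1) (3/4*1+1/4*0) (3/4*1+1/4*1) (1/2)
    (nuv_eq _ _ 0 1 (by simp) (by simp)) (nuv_eq _ _ 1 1 (by simp) (by simp))
    (nuv_eq _ _ 1 0 (by simp) (by simp)) (nuv_eq _ _ 1 1 (by simp) (by simp))
    (by apply NNReal.coe_injective; push_cast; norm_num)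

lemma P_pt : P {(((true, true), (true, true)) : Q)} = ((9/32 : ℝ≥0) : ℝ≥0∞) := by
  have h : ({(((true, true), (true, true)) : Q)} : Set Q)
      = (({true} : Set Bool) ×ˢ ({true} : Set Bool))
        ×ˢ (({true} : Set Bool) ×ˢ ({true} : Set Bool)) := by
    ext ω
    simp only [Set.mem_singleton_iff, Set.mem_prod, Set.mem_singleton_iff, Prod.ext_iff]
  rw [h]
  exact P_val _ _ (3/4*1+1/4*0) (3/4*1+1/4*0) (3/4*0+1/4*0) (3/4*0+1/4*0) (9/32)
    (nuv_eq _ _ 1 0 (by simp) (by simp)) (nuv_eq _ _ 1 0 (by simp) (by simp))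
    (nuv_eq _ _ 0 0 (by simp) (by simp)) (nuv_eq _ _ 0 0 (by simp) (by simp))
    (by apply NNReal.coe_injective; push_cast; norm_num)

/-! Conditional expectation machinery. -/

def ST : Set Q := {ω | ω.1.2 = true}
def SF : Set Q := {ω | ω.1.2 = false}

lemma SF_eq_compl : SF = STᶜ := by
  ext ω; simp [ST, SF]

lemma ST_rect : ST = ((Set.univ : Set Bool) ×ˢ ({true} : Set Bool)) ×ˢ (Set.univ : Set (Bool × Bool)) := by
  ext ω
  simp only [ST, Set.mem_setOf_eq, Set.mem_prod, Set.mem_singleton_iff, Set.mem_univ,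
    true_and, and_true]

lemma SF_rect : SF = ((Set.univ : Set Bool) ×ˢ ({false} : Set Bool)) ×ˢ (Set.univ : Set (Bool × Bool)) := by
  ext ω
  simp only [SF, Set.mem_setOf_eq, Set.mem_prod, Set.mem_singleton_iff, Set.mem_univ,
    true_and, and_true]

lemma set_bool_cases (t : Set Bool) : t = ∅ ∨ t = {true} ∨ t = {false} ∨ t = Set.univ := by
  by_cases hT : true ∈ t <;> by_cases hF : false ∈ t
  · right; right; right; ext x; cases x <;> simp [hT, hF]
  · right; left; ext x; cases x <;> simp [hT, hF]
  · right; right; left; ext x; cases x <;> simp [hT, hF]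
  · left; ext x; cases x <;> simp [hT, hF]

def mY1 : MeasurableSpace Q := MeasurableSpace.comap (fun ω : Q => ω.1.2) inferInstance

lemma hmY1 : mY1 ≤ (inferInstance : MeasurableSpace Q) :=
  (Measurable.of_discrete (f := fun ω : Q => ω.1.2)).comap_le

lemma condexp_helper (A : Set Q) (a b : ℝ)
    (hT : (P (A ∩ ST)).toReal = a * (P ST).toReal)
    (hF : (P (A ∩ SF)).toReal = b * (P SF).toReal) :
    (fun ω : Q => if ω.1.2 = true then a else b) =ᵐ[P] (P⟦A | mY1⟧) := by
  have hSTm : MeasurableSet ST := .of_discrete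
  have hAm : MeasurableSet A := .of_discrete
  have key1 : ∫ x in ST, (if x.1.2 = true then a else b) ∂P
      = ∫ x in ST, A.indicator (fun _ => (1:ℝ)) x ∂P := by
    rw [setIntegral_indicator hAm,
      setIntegral_congr_fun hSTm (g := fun _ => a) (fun x hx => by simp [ST] at hx; simp [hx]),
      setIntegral_const, setIntegral_const]
    simp [Set.inter_comm, hT, mul_comm, measureReal_def]
  have key2 : ∫ x in SF, (if x.1.2 = true then a else b) ∂P
      = ∫ x in SF, A.indicator (fun _ => (1:ℝ)) x ∂P := by
    rw [setIntegral_indicator hAm,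
      setIntegral_congr_fun (MeasurableSet.of_discrete) (g := fun _ => b)
        (fun x hx => by simp [SF] at hx; simp [hx]),
      setIntegral_const, setIntegral_const]
    simp [Set.inter_comm, hF, mul_comm, measureReal_def]
  refine ae_eq_condExp_of_forall_setIntegral_eq hmY1
    (Integrable.of_finite) (fun s _ _ => Integrable.integrableOn Integrable.of_finite)
    (fun s hs _ => ?_) ?_
  · obtain ⟨t, -, rfl⟩ := hs
    rcases set_bool_cases t with rfl | rfl | rfl | rfl
    · simp
    · exact key1
    · exact key2
    · have hsplit : ∀ g : Q → ℝ, Integrable g P →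
          ∫ x in (fun ω : Q => ω.1.2) ⁻¹' Set.univ, g x ∂P
            = ∫ x in ST, g x ∂P + ∫ x in SF, g x ∂P := by
        intro g hg
        rw [Set.preimage_univ, Measure.restrict_univ, SF_eq_compl,
          ← integral_add_compl hSTm hg]
      rw [hsplit _ Integrable.of_finite, hsplit _ Integrable.of_finite, key1, key2]
  · refine StronglyMeasurable.aestronglyMeasurable ?_
    refine Measurable.stronglyMeasurable ?_
    have h1 : Measurable[mY1] (fun ω : Q => ω.1.2) := fun t ht => ⟨t, ht, rfl⟩
    exact (Measurable.of_discrete (f := fun v : Bool => if v = true then a else b)).comp h1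

/-! The key consequence of a reverse representation. -/

lemma revrep_key {T Ψ : Type} [MeasurableSpace T] [MeasurableSpace Ψ]
    (μ : Measure T) [IsProbabilityMeasure μ] (ν : Measure Ψ) [IsProbabilityMeasure ν]
    (β : Kernel Ψ Bool) [IsMarkovKernel β] (α : Kernel (T × Bool) Bool) [IsMarkovKernel α]
    (R : Measure ((Bool × Bool) × (Bool × Bool)))
    (hR : R = (μ.prod ν).bind fun p =>
      (jointYX (β p.2) fun y => α (p.1, y)).prod (jointYX (β p.2) fun y => α (p.1, y))) :
    R ((({true} : Set Bool) ×ˢ ({true} : Set Bool)) ×ˢ (Set.univ ×ˢ ({true} : Set Bool)))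
        * R (((Set.univ : Set Bool) ×ˢ ({true} : Set Bool)) ×ˢ (Set.univ : Set (Bool × Bool)))
      = R ((({true} : Set Bool) ×ˢ ({true} : Set Bool)) ×ˢ (Set.univ : Set (Bool × Bool)))
        * R (((Set.univ : Set Bool) ×ˢ ({true} : Set Bool)) ×ˢ (Set.univ ×ˢ ({true} : Set Bool))) := by
  classical
  set κ : Kernel (T × Ψ) (Bool × Bool) :=
    Kernel.map ((β.comap Prod.snd measurable_snd) ⊗ₖ
      (α.comap (fun q : (T × Ψ) × Bool => (q.1.1, q.2)) (by fun_prop))) Prod.swap with hκdef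
  haveI : IsMarkovKernel κ := by
    rw [hκdef]; exact Kernel.IsMarkovKernel.map _ measurable_swap
  have hκ : ∀ (p : T × Ψ) (s : Set (Bool × Bool)), MeasurableSet s →
      κ p s = ∫⁻ y, α (p.1, y) ((fun x => (x, y)) ⁻¹' s) ∂(β p.2) := by
    intro p s hs
    rw [hκdef, Kernel.map_apply' _ measurable_swap _ hs,
      Kernel.compProd_apply (measurable_swap hs)]
    simp only [Kernel.comap_apply]
    rfl
  have hjoint : ∀ p : T × Ψ, jointYX (β p.2) (fun y => α (p.1, y)) = κ p := by
    intro p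
    refine Measure.ext fun s hs => ?_
    rw [jointYX, Measure.bind_apply hs Measurable.of_discrete.aemeasurable, hκ p s hs]
    refine lintegral_congr fun y => ?_
    rw [Measure.map_apply measurable_prodMk_right hs]
  have hRs : ∀ s : Set ((Bool × Bool) × (Bool × Bool)), MeasurableSet s →
      R s = ∫⁻ p, (κ ×ₖ κ) p s ∂(μ.prod ν) := by
    intro s hs
    rw [hR]
    simp only [hjoint, ← Kernel.prod_apply]
    exact Measure.bind_apply hs (Kernel.measurable _).aemeasurable
  have hv1 : ∀ p : T × Ψ, κ p (({true} : Set Bool) ×ˢ ({true} : Set Bool))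
      = α (p.1, true) {true} * β p.2 {true} := by
    intro p
    rw [hκ p _ MeasurableSet.of_discrete, lintegral_fintype]
    have e1 : ((fun x => (x, true)) ⁻¹' (({true} : Set Bool) ×ˢ ({true} : Set Bool))) = {true} := by
      ext x; simp
    have e2 : ((fun x => (x, false)) ⁻¹' (({true} : Set Bool) ×ˢ ({true} : Set Bool))) = ∅ := by
      ext x; simp
    rw [Fintype.sum_bool, e1, e2, measure_empty, zero_mul, add_zero]
  have hv2 : ∀ p : T × Ψ, κ p ((Set.univ : Set Bool) ×ˢ ({true} : Set Bool)) = β p.2 {true} := by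
    intro p
    rw [hκ p _ MeasurableSet.of_discrete, lintegral_fintype]
    have e1 : ((fun x => (x, true)) ⁻¹' ((Set.univ : Set Bool) ×ˢ ({true} : Set Bool)))
        = Set.univ := by ext x; simp
    have e2 : ((fun x => (x, false)) ⁻¹' ((Set.univ : Set Bool) ×ˢ ({true} : Set Bool))) = ∅ := by
      ext x; simp
    rw [Fintype.sum_bool, e1, e2, measure_univ, measure_empty, one_mul, zero_mul, add_zero]
  have hfA : Measurable fun θ : T => α (θ, true) {true} :=
    (Kernel.measurable_coe α MeasurableSet.of_discrete).comp measurable_prodMk_right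
  have hfB : Measurable fun ψ : Ψ => β ψ {true} :=
    Kernel.measurable_coe β MeasurableSet.of_discrete
  have h1 : R ((({true} : Set Bool) ×ˢ ({true} : Set Bool)) ×ˢ (Set.univ ×ˢ ({true} : Set Bool)))
      = (∫⁻ θ, α (θ, true) {true} ∂μ) * ∫⁻ ψ, β ψ {true} * β ψ {true} ∂ν := by
    rw [hRs _ MeasurableSet.of_discrete, ← lintegral_prod_mul (g := fun ψ => β ψ {true} * β ψ {true}) hfA.aemeasurable
      (hfB.mul hfB).aemeasurable]
    refine lintegral_congr fun p => ?_
    simp only [Kernel.prod_apply, Measure.prod_prod, hv1, hv2]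
    ring
  have h2 : R ((({true} : Set Bool) ×ˢ ({true} : Set Bool)) ×ˢ (Set.univ : Set (Bool × Bool)))
      = (∫⁻ θ, α (θ, true) {true} ∂μ) * ∫⁻ ψ, β ψ {true} ∂ν := by
    rw [hRs _ MeasurableSet.of_discrete, ← lintegral_prod_mul hfA.aemeasurable hfB.aemeasurable]
    refine lintegral_congr fun p => ?_
    simp only [Kernel.prod_apply, Measure.prod_prod, hv1, measure_univ, mul_one]
  have h3 : R (((Set.univ : Set Bool) ×ˢ ({true} : Set Bool)) ×ˢ (Set.univ : Set (Bool × Bool)))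
      = (∫⁻ (_ : T), 1 ∂μ) * ∫⁻ ψ, β ψ {true} ∂ν := by
    rw [hRs _ MeasurableSet.of_discrete, ← lintegral_prod_mul measurable_const.aemeasurable
      hfB.aemeasurable]
    refine lintegral_congr fun p => ?_
    simp only [Kernel.prod_apply, Measure.prod_prod, hv2, measure_univ, mul_one, one_mul]
  have h4 : R (((Set.univ : Set Bool) ×ˢ ({true} : Set Bool)) ×ˢ (Set.univ ×ˢ ({true} : Set Bool)))
      = (∫⁻ (_ : T), 1 ∂μ) * ∫⁻ ψ, β ψ {true} * β ψ {true} ∂ν := by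
    rw [hRs _ MeasurableSet.of_discrete, ← lintegral_prod_mul (g := fun ψ => β ψ {true} * β ψ {true}) measurable_const.aemeasurable
      (hfB.mul hfB).aemeasurable]
    refine lintegral_congr fun p => ?_
    simp only [Kernel.prod_apply, Measure.prod_prod, hv2]
    ring
  rw [h1, h2, h3, h4]
  ring

end CVX

/-- **Non-degeneracy of cause variability.** There exist a probability space and Bool-valued
random variables `X¹, Y¹, X², Y²` whose joint law admits a cause-variability `X → Y`
representation, yet `X¹` is not conditionally independent of `Y²` given `Y¹`; consequently,
this joint law admits no `Y → X` representation. -/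

theorem exists_causeVarRep_not_condIndep :
    ∃ (Ω : Type) (mΩ : MeasurableSpace Ω), letI := mΩ;
    ∃ (_ : StandardBorelSpace Ω) (P : Measure Ω) (hP : IsProbabilityMeasure P), letI := hP;
    ∃ (X1 Y1 X2 Y2 : Ω → Bool) (_ : Measurable X1) (hY1 : Measurable Y1)
      (_ : Measurable X2) (_ : Measurable Y2),
      HasCauseVarRep P X1 Y1 X2 Y2 ∧
      ¬ CondIndepRV P X1 Y2 Y1 hY1 ∧
      ¬ HasRevRep P X1 Y1 X2 Y2 := by
  classical
  refine ⟨CVX.Q, inferInstance, inferInstance, CVX.P, inferInstance,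
    fun ω => ω.1.1, fun ω => ω.1.2, fun ω => ω.2.1, fun ω => ω.2.2,
    .of_discrete, .of_discrete, .of_discrete, .of_discrete, ?_, ?_, ?_⟩
  case _ =>
    -- HasCauseVarRep
    refine ⟨Bool, inferInstance, CVX.mu0, inferInstance, Kernel.id, inferInstance,
      CVX.betaK, inferInstance, ?_⟩
    have hquad : quadLaw CVX.P (fun ω => ω.1.1) (fun ω => ω.1.2) (fun ω => ω.2.1)
        (fun ω => ω.2.2) = CVX.P := by
      rw [quadLaw]
      have hid : (fun ω : CVX.Q => ((ω.1.1, ω.1.2), (ω.2.1, ω.2.2))) = id := rfl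
      rw [hid, Measure.map_id]
    rw [hquad]
    rfl
  case _ =>
    -- ¬ CondIndepRV
    intro hCI
    have h := (ProbabilityTheory.condIndepFun_iff_condExp_inter_preimage_eq_mul
      (Measurable.of_discrete) (Measurable.of_discrete)).mp hCI {true} {true}
      MeasurableSet.of_discrete MeasurableSet.of_discrete
    set A1 : Set CVX.Q := (fun ω : CVX.Q => ω.1.1) ⁻¹' {true} with hA1
    set B1 : Set CVX.Q := (fun ω : CVX.Q => ω.2.2) ⁻¹' {true} with hB1
    have hA1ST : A1 ∩ CVX.ST
        = (({true} : Set Bool) ×ˢ ({true} : Set Bool)) ×ˢ (Set.univ : Set (Bool × Bool)) := by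
      ext ω
      simp only [hA1, CVX.ST, Set.mem_inter_iff, Set.mem_preimage, Set.mem_singleton_iff,
        Set.mem_setOf_eq, Set.mem_prod, Set.mem_univ, true_and, and_true]
    have hA1SF : A1 ∩ CVX.SF
        = (({true} : Set Bool) ×ˢ ({false} : Set Bool)) ×ˢ (Set.univ : Set (Bool × Bool)) := by
      ext ω
      simp only [hA1, CVX.SF, Set.mem_inter_iff, Set.mem_preimage, Set.mem_singleton_iff,
        Set.mem_setOf_eq, Set.mem_prod, Set.mem_univ, true_and, and_true]
    have hB1ST : B1 ∩ CVX.ST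
        = ((Set.univ : Set Bool) ×ˢ ({true} : Set Bool)) ×ˢ (Set.univ ×ˢ ({true} : Set Bool)) := by
      ext ω
      simp only [hB1, CVX.ST, Set.mem_inter_iff, Set.mem_preimage, Set.mem_singleton_iff,
        Set.mem_setOf_eq, Set.mem_prod, Set.mem_univ, true_and, and_true]
      tauto
    have hB1SF : B1 ∩ CVX.SF
        = ((Set.univ : Set Bool) ×ˢ ({false} : Set Bool)) ×ˢ (Set.univ ×ˢ ({true} : Set Bool)) := by
      ext ω
      simp only [hB1, CVX.SF, Set.mem_inter_iff, Set.mem_preimage, Set.mem_singleton_iff,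
        Set.mem_setOf_eq, Set.mem_prod, Set.mem_univ, true_and, and_true]
      tauto
    have hABST : (A1 ∩ B1) ∩ CVX.ST
        = (({true} : Set Bool) ×ˢ ({true} : Set Bool)) ×ˢ (Set.univ ×ˢ ({true} : Set Bool)) := by
      ext ω
      simp only [hA1, hB1, CVX.ST, Set.mem_inter_iff, Set.mem_preimage, Set.mem_singleton_iff,
        Set.mem_setOf_eq, Set.mem_prod, Set.mem_univ, true_and]
      tauto
    have hABSF : (A1 ∩ B1) ∩ CVX.SF
        = (({true} : Set Bool) ×ˢ ({false} : Set Bool)) ×ˢ (Set.univ ×ˢ ({true} : Set Bool)) := by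
      ext ω
      simp only [hA1, hB1, CVX.SF, Set.mem_inter_iff, Set.mem_preimage, Set.mem_singleton_iff,
        Set.mem_setOf_eq, Set.mem_prod, Set.mem_univ, true_and]
      tauto
    have e1 := CVX.condexp_helper A1 (3/4) (1/4)
      (by rw [hA1ST, CVX.ST_rect, CVX.P_R2, CVX.P_R4, ENNReal.coe_toReal, ENNReal.coe_toReal]; push_cast; norm_num)
      (by rw [hA1SF, CVX.SF_rect, CVX.P_R2', CVX.P_R4', ENNReal.coe_toReal, ENNReal.coe_toReal]; push_cast; norm_num)
    have e2 := CVX.condexp_helper B1 (5/8) (3/8)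
      (by rw [hB1ST, CVX.ST_rect, CVX.P_R3, CVX.P_R4, ENNReal.coe_toReal, ENNReal.coe_toReal]; push_cast; norm_num)
      (by rw [hB1SF, CVX.SF_rect, CVX.P_R3', CVX.P_R4', ENNReal.coe_toReal, ENNReal.coe_toReal]; push_cast; norm_num)
    have e12 := CVX.condexp_helper (A1 ∩ B1) (9/16) (3/16)
      (by rw [hABST, CVX.ST_rect, CVX.P_R1, CVX.P_R4, ENNReal.coe_toReal, ENNReal.coe_toReal]; push_cast; norm_num)
      (by rw [hABSF, CVX.SF_rect, CVX.P_R1', CVX.P_R4', ENNReal.coe_toReal, ENNReal.coe_toReal]; push_cast; norm_num)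
    unfold CVX.mY1 at e1 e2 e12
    have hbad : ∀ᵐ ω ∂CVX.P,
        (if ω.1.2 = true then (9:ℝ)/16 else 3/16)
          = (if ω.1.2 = true then (3:ℝ)/4 else 1/4) * (if ω.1.2 = true then (5:ℝ)/8 else 3/8) := by
      filter_upwards [e12, h, e1, e2] with ω h1 h2 h3 h4
      rw [h1, h2, ← h3, ← h4]
    have hnull := ae_iff.mp hbad
    have hmem : (((true, true), (true, true)) : CVX.Q) ∈
        {ω : CVX.Q | ¬ ((if ω.1.2 = true then (9:ℝ)/16 else 3/16)
          = (if ω.1.2 = true then (3:ℝ)/4 else 1/4) * (if ω.1.2 = true then (5:ℝ)/8 else 3/8))} := by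
      simp only [Set.mem_setOf_eq, if_pos rfl]
      norm_num
    have hle := measure_mono (μ := CVX.P) (Set.singleton_subset_iff.mpr hmem)
    rw [hnull, CVX.P_pt] at hle
    have : ((9/32 : ℝ≥0) : ℝ≥0∞) ≠ 0 := by
      simp only [ne_eq, ENNReal.coe_eq_zero]
      intro hc
      have := congrArg NNReal.toReal hc
      push_cast at this
      norm_num at this
    exact this (le_antisymm hle zero_le)
  case _ =>
    -- ¬ HasRevRep
    rintro ⟨T, mT, Ψ, mΨ, μ, hμ, ν, hν, β, hβ, α, hα, h⟩
    have hquad : quadLaw CVX.P (fun ω => ω.1.1) (fun ω => ω.1.2) (fun ω => ω.2.1)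
        (fun ω => ω.2.2) = CVX.P := by
      rw [quadLaw]
      have hid : (fun ω : CVX.Q => ((ω.1.1, ω.1.2), (ω.2.1, ω.2.2))) = id := rfl
      rw [hid, Measure.map_id]
    rw [hquad] at h
    have key := CVX.revrep_key μ ν β α CVX.P h
    rw [CVX.P_R1, CVX.P_R2, CVX.P_R3, CVX.P_R4] at key
    rw [← ENNReal.coe_mul, ← ENNReal.coe_mul, ENNReal.coe_inj] at key
    have := congrArg NNReal.toReal key
    push_cast at this
    norm_num at this
end

section
/- Non-degeneracy of mechanism variability: There exist a probability space and Bool-valued random variables X¹, Y¹, X², Y² whose joint law admits a mechanism-variability X→Y representation (with E = F = Bool), yet X¹ is not conditionally independent of Y² given Y¹. Consequently this joint law admits no Y→X representation. -/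
open MeasureTheory ProbabilityTheory

namespace MechVarAux

open scoped ENNReal

abbrev Ω3 : Type := Bool × Bool × Bool

def mech (ψ x : Bool) : Bool := if ψ then x else true

noncomputable def fair : Measure Bool :=
  (2 : ℝ≥0∞)⁻¹ • (Measure.dirac true + Measure.dirac false)

lemma fair_lintegral (f : Bool → ℝ≥0∞) :
    ∫⁻ x, f x ∂fair = 2⁻¹ * (f true + f false) := by
  simp [fair, lintegral_smul_measure, lintegral_add_measure, lintegral_dirac, mul_add]

instance : IsProbabilityMeasure fair := by
  constructor
  have : fair Set.univ = ∫⁻ _, 1 ∂fair := by simp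
  rw [this, fair_lintegral]
  norm_num
  exact ENNReal.inv_mul_cancel (by norm_num) (by norm_num)

noncomputable def Puni : Measure Ω3 := (8 : ℝ≥0∞)⁻¹ • Measure.count

lemma h8 : (8:ℝ≥0∞)⁻¹ = 2⁻¹*2⁻¹*2⁻¹ := by
  rw [← ENNReal.mul_inv (by norm_num) (by norm_num),
    ← ENNReal.mul_inv (by norm_num) (by norm_num)]
  norm_num

lemma Puni_apply (p : Ω3 → Prop) [DecidablePred p] :
    Puni {ω | p ω} = (8 : ℝ≥0∞)⁻¹ * ∑ ω : Ω3, (if p ω then 1 else 0) := by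
  have hset : {ω | p ω} = ↑(Finset.univ.filter p) := by ext ω; simp
  rw [Puni, Measure.smul_apply, hset, Measure.count_apply_finset, smul_eq_mul,
    Finset.card_filter]
  push_cast
  rfl

instance : IsProbabilityMeasure Puni := by
  constructor
  have : (Set.univ : Set Ω3) = {ω | True} := by ext; simp
  rw [this, Puni_apply, h8]
  simp
  ring_nf
  rw [show (8:ℝ≥0∞) = 2^3 by norm_num, ← mul_pow,
    ENNReal.inv_mul_cancel (by norm_num) (by norm_num), one_pow]


def XX1 (ω : Ω3) : Bool := ω.2.1
def YY1 (ω : Ω3) : Bool := mech ω.1 ω.2.1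
def XX2 (ω : Ω3) : Bool := ω.2.2
def YY2 (ω : Ω3) : Bool := mech ω.1 ω.2.2

def Φ (ω : Ω3) : (Bool × Bool) × (Bool × Bool) := ((XX1 ω, YY1 ω), (XX2 ω, YY2 ω))

lemma quad_apply (S : Set ((Bool × Bool) × (Bool × Bool))) :
    quadLaw Puni XX1 YY1 XX2 YY2 S = Puni (Φ ⁻¹' S) := by
  rw [quadLaw, Measure.map_apply Measurable.of_discrete MeasurableSet.of_discrete]
  rfl

noncomputable def βmech : Kernel (Bool × Bool) Bool :=
  Kernel.deterministic (fun p => mech p.1 p.2) Measurable.of_discrete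

instance : IsMarkovKernel βmech := by unfold βmech; infer_instance

lemma jointXY_fair_singleton (ψ : Bool) (q : Bool × Bool) :
    jointXY fair (fun x => βmech (ψ, x)) {q} =
      2⁻¹ * ((if ((true : Bool), mech ψ true) = q then (1:ℝ≥0∞) else 0)
        + (if ((false : Bool), mech ψ false) = q then (1:ℝ≥0∞) else 0)) := by
  rw [jointXY, Measure.bind_apply MeasurableSet.of_discrete
    (measurable_of_countable _).aemeasurable, fair_lintegral]
  have hx : ∀ x : Bool, ((βmech (ψ, x)).map fun y => (x, y)) {q}
      = if (x, mech ψ x) = q then (1:ℝ≥0∞) else 0 := by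
    intro x
    rw [βmech, Kernel.deterministic_apply, Measure.map_dirac' (measurable_of_countable _),
      Measure.dirac_apply]
    simp [Set.indicator, eq_comm]
  rw [hx, hx]

lemma jointXY_fair_prob (ψ : Bool) :
    IsProbabilityMeasure (jointXY fair (fun x => βmech (ψ, x))) := by
  constructor
  rw [jointXY, Measure.bind_apply MeasurableSet.univ
    (measurable_of_countable _).aemeasurable, fair_lintegral]
  have h : ∀ x : Bool, ((βmech (ψ, x)).map fun y => (x, y)) Set.univ = 1 := by
    intro x
    rw [βmech, Kernel.deterministic_apply, Measure.map_dirac' (measurable_of_countable _)]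
    simp
  rw [h, h, show (1:ℝ≥0∞)+1 = 2 by norm_num]
  exact ENNReal.inv_mul_cancel (by norm_num) (by norm_num)


lemma part1_eq :
    quadLaw Puni XX1 YY1 XX2 YY2 =
      fair.bind fun ψ =>
        (jointXY fair fun x => βmech (ψ, x)).prod (jointXY fair fun x => βmech (ψ, x)) := by
  apply Measure.ext_of_singleton
  intro q
  rw [Measure.bind_apply MeasurableSet.of_discrete (measurable_of_countable _).aemeasurable, fair_lintegral]
  have hpair : ∀ ψ : Bool,
      ((jointXY fair fun x => βmech (ψ, x)).prod (jointXY fair fun x => βmech (ψ, x))) {q}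
      = (2⁻¹ * ((if ((true : Bool), mech ψ true) = q.1 then (1:ℝ≥0∞) else 0)
        + (if ((false : Bool), mech ψ false) = q.1 then (1:ℝ≥0∞) else 0)))
        * (2⁻¹ * ((if ((true : Bool), mech ψ true) = q.2 then (1:ℝ≥0∞) else 0)
        + (if ((false : Bool), mech ψ false) = q.2 then (1:ℝ≥0∞) else 0))) := by
    intro ψ
    haveI := jointXY_fair_prob ψ
    rw [show ({q} : Set ((Bool × Bool) × (Bool × Bool))) = {q.1} ×ˢ {q.2} by
      rw [Set.singleton_prod_singleton],
      Measure.prod_prod, jointXY_fair_singleton, jointXY_fair_singleton]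
  rw [quad_apply, hpair, hpair]
  obtain ⟨⟨a, b⟩, c, d⟩ := q
  have hpre : Φ ⁻¹' {((a, b), (c, d))} = {ω | Φ ω = ((a, b), (c, d))} := rfl
  rw [hpre, Puni_apply, h8]
  cases a <;> cases b <;> cases c <;> cases d <;>
    · simp only [Φ, XX1, YY1, XX2, YY2, mech, Fintype.sum_prod_type, Fintype.sum_bool,
        Prod.mk.injEq, if_true, if_false, Bool.false_eq_true, Bool.true_eq_false,
        and_true, and_false, true_and, false_and, if_neg, if_pos, ite_true, ite_false]
      simp
      try ring


section Rev

set_option linter.unusedSectionVars false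

variable {T Ψ : Type} [MeasurableSpace T] [MeasurableSpace Ψ]
  (μ : Measure T) (ν : Measure Ψ) [IsProbabilityMeasure μ] [IsProbabilityMeasure ν]
  (β : Kernel Ψ Bool) [IsMarkovKernel β] (α : Kernel (T × Bool) Bool) [IsMarkovKernel α]

noncomputable def κA : Kernel ((T × Ψ) × Bool) Bool :=
  α.comap (fun q => (q.1.1, q.2)) (measurable_fst.fst.prodMk measurable_snd)

noncomputable def pairK : Kernel ((T × Ψ) × Bool) (Bool × Bool) :=
  κA α ×ₖ Kernel.deterministic (fun q => q.2) measurable_snd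

instance : IsMarkovKernel (κA (T := T) (Ψ := Ψ) α) := by unfold κA; infer_instance
instance : IsMarkovKernel (pairK (T := T) (Ψ := Ψ) α) := by unfold pairK; infer_instance

noncomputable def Bk : Kernel (T × Ψ) Bool := β.comap Prod.snd measurable_snd

instance : IsMarkovKernel (Bk (T := T) (Ψ := Ψ) β) := by unfold Bk; infer_instance

noncomputable def κ1 : Kernel (T × Ψ) (Bool × Bool) := Kernel.snd (Bk β ⊗ₖ pairK α)

instance : IsMarkovKernel (κ1 (T := T) (Ψ := Ψ) β α) := by unfold κ1 Bk pairK κA; infer_instance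

lemma κ1_apply (p : T × Ψ) :
    κ1 β α p = jointYX (β p.2) (fun y => α (p.1, y)) := by
  ext s hs
  rw [κ1, Kernel.snd_apply' _ _ hs, Kernel.compProd_apply MeasurableSet.of_discrete, jointYX,
    Measure.bind_apply hs (measurable_of_countable _).aemeasurable, Bk, Kernel.comap_apply]
  apply lintegral_congr
  intro y
  rw [pairK, Kernel.prod_apply, κA, Kernel.comap_apply, Kernel.deterministic_apply,
    Measure.prod_dirac]
  rfl

lemma κ1_ab (p : T × Ψ) (a b : Bool) :
    κ1 β α p ({a} ×ˢ {b}) = α (p.1, b) {a} * β p.2 {b} := by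
  rw [κ1_apply, jointYX, Measure.bind_apply MeasurableSet.of_discrete
    (measurable_of_countable _).aemeasurable]
  have h : ∀ y : Bool, ((α (p.1, y)).map fun x => (x, y)) ({a} ×ˢ {b})
      = Set.indicator {b} (fun _ => α (p.1, b) {a}) y := by
    intro y
    rw [Measure.map_apply (measurable_of_countable _) MeasurableSet.of_discrete,
      Set.singleton_prod_singleton]
    by_cases hy : y = b
    · have h2 : ((fun x : Bool => (x, y)) ⁻¹' {((a : Bool), b)}) = {a} := by
        ext x; simp [Prod.ext_iff, hy]
      rw [h2, hy]
      simp [Set.indicator]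
    · have h2 : ((fun x : Bool => (x, y)) ⁻¹' {((a : Bool), b)}) = ∅ := by
        ext x; simp [Prod.ext_iff, hy]
      rw [h2]
      simp [Set.indicator, hy]
  calc ∫⁻ y, ((α (p.1, y)).map fun x => (x, y)) ({a} ×ˢ {b}) ∂(β p.2)
      = ∫⁻ y, Set.indicator {b} (fun _ => α (p.1, b) {a}) y ∂(β p.2) := lintegral_congr h
    _ = α (p.1, b) {a} * β p.2 {b} :=
        lintegral_indicator_const MeasurableSet.of_discrete _

lemma κ1_c (p : T × Ψ) (c : Bool) :
    κ1 β α p ((Set.univ : Set Bool) ×ˢ {c}) = β p.2 {c} := by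
  rw [κ1_apply, jointYX, Measure.bind_apply MeasurableSet.of_discrete
    (measurable_of_countable _).aemeasurable]
  have h : ∀ y : Bool, ((α (p.1, y)).map fun x => (x, y)) ((Set.univ : Set Bool) ×ˢ {c})
      = Set.indicator {c} (fun _ => (1:ℝ≥0∞)) y := by
    intro y
    rw [Measure.map_apply (measurable_of_countable _) MeasurableSet.of_discrete]
    by_cases hy : y = c
    · have h2 : ((fun x : Bool => (x, y)) ⁻¹' ((Set.univ : Set Bool) ×ˢ {c})) = Set.univ := by
        ext x; simp [hy]
      rw [h2, hy, Set.indicator_of_mem (Set.mem_singleton c)]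
      exact measure_univ
    · have h2 : ((fun x : Bool => (x, y)) ⁻¹' ((Set.univ : Set Bool) ×ˢ {c})) = ∅ := by
        ext x
        simp only [Set.mem_preimage, Set.mem_prod, Set.mem_univ, true_and,
          Set.mem_singleton_iff, Set.mem_empty_iff_false, iff_false]
        exact hy
      rw [h2]
      simp [Set.indicator, hy]
  calc ∫⁻ y, ((α (p.1, y)).map fun x => (x, y)) ((Set.univ : Set Bool) ×ˢ {c}) ∂(β p.2)
      = ∫⁻ y, Set.indicator {c} (fun _ => (1:ℝ≥0∞)) y ∂(β p.2) := lintegral_congr h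
    _ = 1 * β p.2 {c} := lintegral_indicator_const MeasurableSet.of_discrete _
    _ = β p.2 {c} := one_mul _

lemma rev_value (a b c : Bool) :
    ((μ.prod ν).bind fun p =>
        (jointYX (β p.2) fun y => α (p.1, y)).prod (jointYX (β p.2) fun y => α (p.1, y)))
      (({a} ×ˢ {b}) ×ˢ ((Set.univ : Set Bool) ×ˢ {c}))
    = (∫⁻ θ, α (θ, b) {a} ∂μ) * ∫⁻ ψ, β ψ {b} * β ψ {c} ∂ν := by
  have hfun : (fun p : T × Ψ =>
      (jointYX (β p.2) fun y => α (p.1, y)).prod (jointYX (β p.2) fun y => α (p.1, y)))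
      = fun p => (κ1 β α ×ₖ κ1 β α) p := by
    funext p
    rw [Kernel.prod_apply, κ1_apply]
  rw [hfun, Measure.bind_apply MeasurableSet.of_discrete (Kernel.measurable _).aemeasurable]
  have hval : ∀ p : T × Ψ,
      (κ1 β α ×ₖ κ1 β α) p (({a} ×ˢ {b}) ×ˢ ((Set.univ : Set Bool) ×ˢ {c}))
      = (α (p.1, b) {a} * β p.2 {b}) * β p.2 {c} := by
    intro p
    rw [Kernel.prod_apply, Measure.prod_prod, κ1_ab, κ1_c]
  rw [lintegral_congr hval]
  have hmα : Measurable fun p : T × Ψ => α (p.1, b) {a} :=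
    (Kernel.measurable_coe α MeasurableSet.of_discrete).comp
      (measurable_fst.prodMk measurable_const)
  have hmβb : Measurable fun p : T × Ψ => β p.2 {b} :=
    (Kernel.measurable_coe β MeasurableSet.of_discrete).comp measurable_snd
  have hmβc : Measurable fun p : T × Ψ => β p.2 {c} :=
    (Kernel.measurable_coe β MeasurableSet.of_discrete).comp measurable_snd
  rw [MeasureTheory.lintegral_prod (fun p : T × Ψ => α (p.1, b) {a} * β p.2 {b} * β p.2 {c}) ((hmα.mul hmβb).mul hmβc).aemeasurable]
  have hinner : ∀ θ : T, ∫⁻ ψ, (α (θ, b) {a} * β ψ {b}) * β ψ {c} ∂ν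
      = α (θ, b) {a} * ∫⁻ ψ, β ψ {b} * β ψ {c} ∂ν := by
    intro θ
    simp_rw [mul_assoc]
    exact lintegral_const_mul _ ((Kernel.measurable_coe β MeasurableSet.of_discrete).mul
      (Kernel.measurable_coe β MeasurableSet.of_discrete))
  rw [lintegral_congr hinner]
  exact lintegral_mul_const _ ((Kernel.measurable_coe α MeasurableSet.of_discrete).comp
    (measurable_id.prodMk measurable_const))

end Rev


lemma quad_S (a b c : Bool) :
    quadLaw Puni XX1 YY1 XX2 YY2 (({a} ×ˢ {b}) ×ˢ ((Set.univ : Set Bool) ×ˢ {c}))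
    = Puni {ω | XX1 ω = a ∧ YY1 ω = b ∧ YY2 ω = c} := by
  rw [quad_apply]
  congr 1
  ext ω
  simp only [Set.mem_preimage, Φ, Set.mem_prod, Set.mem_singleton_iff, Set.mem_univ,
    true_and, Set.mem_setOf_eq]
  cases h2 : XX2 ω <;> simp [eq_comm, and_assoc]

lemma vTTF : Puni {ω | XX1 ω = true ∧ YY1 ω = true ∧ YY2 ω = false} = 8⁻¹ * 1 := by
  rw [Puni_apply]
  congr 1
  simp [XX1, YY1, YY2, mech, Fintype.sum_prod_type]
  decide

lemma vFTT : Puni {ω | XX1 ω = false ∧ YY1 ω = true ∧ YY2 ω = true} = 8⁻¹ * 2 := by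
  rw [Puni_apply]
  congr 1
  simp [XX1, YY1, YY2, mech, Fintype.sum_prod_type]
  norm_cast

lemma vTTT : Puni {ω | XX1 ω = true ∧ YY1 ω = true ∧ YY2 ω = true} = 8⁻¹ * 3 := by
  rw [Puni_apply]
  congr 1
  simp [XX1, YY1, YY2, mech, Fintype.sum_prod_type]
  norm_cast

lemma vFTF : Puni {ω | XX1 ω = false ∧ YY1 ω = true ∧ YY2 ω = false} = 8⁻¹ * 0 := by
  rw [Puni_apply]
  congr 1
  simp [XX1, YY1, YY2, mech, Fintype.sum_prod_type]


section CI

lemma vA : Puni {ω | YY1 ω = true} = 8⁻¹ * 6 := by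
  rw [Puni_apply]
  congr 1
  simp [YY1, mech, Fintype.sum_prod_type]
  norm_cast

lemma vAB : Puni {ω | YY1 ω = true ∧ XX1 ω = false} = 8⁻¹ * 2 := by
  rw [Puni_apply]
  congr 1
  simp [XX1, YY1, mech, Fintype.sum_prod_type]
  norm_cast

lemma vAC : Puni {ω | YY1 ω = true ∧ YY2 ω = false} = 8⁻¹ * 1 := by
  rw [Puni_apply]
  congr 1
  simp [YY1, YY2, mech, Fintype.sum_prod_type]
  decide

lemma vABC : Puni {ω | YY1 ω = true ∧ (XX1 ω = false ∧ YY2 ω = false)} = 0 := by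
  have : Puni {ω | YY1 ω = true ∧ (XX1 ω = false ∧ YY2 ω = false)} = 8⁻¹ * 0 := by
    rw [Puni_apply]
    congr 1
    simp [XX1, YY1, YY2, mech, Fintype.sum_prod_type]
  rw [this, mul_zero]

abbrev mY : MeasurableSpace Ω3 := MeasurableSpace.comap YY1 inferInstance

lemma not_ci (hY1 : Measurable YY1) : ¬ CondIndepRV Puni XX1 YY2 YY1 hY1 := by
  intro hCI
  rw [CondIndepRV] at hCI
  have h := (condIndepFun_iff_condExp_inter_preimage_eq_mul
    (Measurable.of_discrete (f := XX1)) (Measurable.of_discrete (f := YY2))).mp hCI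
    {false} {false} MeasurableSet.of_discrete MeasurableSet.of_discrete
  have hm' : mY ≤ Prod.instMeasurableSpace := hY1.comap_le
  set A : Set Ω3 := YY1 ⁻¹' {true} with hAdef
  have hAm' : MeasurableSet[mY] A := ⟨{true}, MeasurableSet.of_discrete, rfl⟩
  -- condexp is m'-measurable, hence constant on fibers of YY1
  have hconst : ∀ (f : Ω3 → ℝ), StronglyMeasurable[mY] f →
      ∀ ω₁ ω₂, YY1 ω₁ = YY1 ω₂ → f ω₁ = f ω₂ := by
    intro f hf ω₁ ω₂ hy
    by_contra hne
    have hs : MeasurableSet[mY] (f ⁻¹' {f ω₁}) :=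
      hf.measurable (measurableSet_singleton _)
    obtain ⟨u, -, hu⟩ := hs
    have h1 : YY1 ω₁ ∈ u := by
      have : ω₁ ∈ f ⁻¹' {f ω₁} := rfl
      rw [← hu] at this
      exact this
    have h2 : ω₂ ∈ YY1 ⁻¹' u := by
      rw [Set.mem_preimage, ← hy]
      exact h1
    rw [hu] at h2
    exact hne (Set.mem_singleton_iff.mp h2).symm
  -- the integral identity for condexp over A
  have int_eq : ∀ (S : Set Ω3), MeasurableSet S → ∀ ω₀ : Ω3, YY1 ω₀ = true →
      (Puni[S.indicator (fun _ => (1:ℝ)) | mY]) ω₀ * (Puni A).toReal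
        = (Puni (A ∩ S)).toReal := by
    intro S hS ω₀ hω₀
    have hInt : Integrable (S.indicator fun _ => (1:ℝ)) Puni :=
      (integrable_const 1).indicator hS
    have h₁ : ∫ x in A, (Puni[S.indicator (fun _ => (1:ℝ)) | mY]) x ∂Puni
        = ∫ x in A, S.indicator (fun _ => (1:ℝ)) x ∂Puni :=
      setIntegral_condExp hm' hInt hAm'
    have h₂ : ∫ x in A, S.indicator (fun _ => (1:ℝ)) x ∂Puni = (Puni (A ∩ S)).toReal := by
      rw [setIntegral_indicator hS, setIntegral_const, smul_eq_mul, mul_one, Measure.real]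
    have h₃ : ∫ x in A, (Puni[S.indicator (fun _ => (1:ℝ)) | mY]) x ∂Puni
        = (Puni A).toReal * (Puni[S.indicator (fun _ => (1:ℝ)) | mY]) ω₀ := by
      rw [setIntegral_congr_fun (hm' A hAm')
        (g := fun _ => (Puni[S.indicator (fun _ => (1:ℝ)) | mY]) ω₀)
        (fun x hx => hconst _ stronglyMeasurable_condExp x ω₀ (by
          rw [hAdef] at hx
          rw [Set.mem_preimage, Set.mem_singleton_iff] at hx
          rw [hx, hω₀])), setIntegral_const, smul_eq_mul, Measure.real]
    rw [mul_comm, ← h₃, h₁, h₂]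
  -- find a point of A where the product identity holds
  have hAval : Puni A = 8⁻¹ * 6 := vA
  obtain ⟨ω₀, hω₀A, hω₀E⟩ :
      (A ∩ {ω | (Puni[(XX1 ⁻¹' {false} ∩ YY2 ⁻¹' {false}).indicator (fun _ => (1:ℝ)) | mY]) ω
        = (Puni[(XX1 ⁻¹' {false}).indicator (fun _ => (1:ℝ)) | mY]) ω
          * (Puni[(YY2 ⁻¹' {false}).indicator (fun _ => (1:ℝ)) | mY]) ω}).Nonempty := by
    by_contra hemp
    rw [Set.not_nonempty_iff_eq_empty] at hemp
    have hsub : A ⊆ {ω | ¬ ((Puni[(XX1 ⁻¹' {false} ∩ YY2 ⁻¹' {false}).indicator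
        (fun _ => (1:ℝ)) | mY]) ω
        = (Puni[(XX1 ⁻¹' {false}).indicator (fun _ => (1:ℝ)) | mY]) ω
          * (Puni[(YY2 ⁻¹' {false}).indicator (fun _ => (1:ℝ)) | mY]) ω)} := by
      intro ω hω
      by_contra hnot
      simp only [Set.mem_setOf_eq, not_not] at hnot
      exact Set.eq_empty_iff_forall_notMem.mp hemp ω ⟨hω, hnot⟩
    have h0 : Puni A = 0 :=
      measure_mono_null hsub (ae_iff.mp h)
    rw [hAval] at h0
    simp at h0
  have hω₀ : YY1 ω₀ = true := hω₀A
  -- the three integral identities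
  have eBC := int_eq _ (MeasurableSet.of_discrete
    (s := XX1 ⁻¹' {false} ∩ YY2 ⁻¹' {false})) ω₀ hω₀
  have eB := int_eq _ (MeasurableSet.of_discrete (s := XX1 ⁻¹' {false})) ω₀ hω₀
  have eC := int_eq _ (MeasurableSet.of_discrete (s := YY2 ⁻¹' {false})) ω₀ hω₀
  have hABC : A ∩ (XX1 ⁻¹' {false} ∩ YY2 ⁻¹' {false})
      = {ω | YY1 ω = true ∧ (XX1 ω = false ∧ YY2 ω = false)} := by
    ext ω; simp [hAdef]
  have hAB : A ∩ XX1 ⁻¹' {false} = {ω | YY1 ω = true ∧ XX1 ω = false} := by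
    ext ω; simp [hAdef]
  have hAC : A ∩ YY2 ⁻¹' {false} = {ω | YY1 ω = true ∧ YY2 ω = false} := by
    ext ω; simp [hAdef]
  rw [hABC, vABC] at eBC
  rw [hAB, vAB] at eB
  rw [hAC, vAC] at eC
  have hkey : ((8:ℝ≥0∞)⁻¹ * 2).toReal * ((8:ℝ≥0∞)⁻¹ * 1).toReal
      = (0:ℝ≥0∞).toReal * (Puni A).toReal := by
    rw [← eBC, ← eB, ← eC, Set.mem_setOf_eq.mp hω₀E]
    ring
  rw [hAval] at hkey
  simp [ENNReal.toReal_mul, ENNReal.toReal_inv] at hkey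

end CI

lemma mech_rep : HasMechVarRep Puni XX1 YY1 XX2 YY2 :=
  ⟨Bool, inferInstance, fair, inferInstance, fair, inferInstance, βmech, inferInstance,
    part1_eq⟩

lemma not_rev : ¬ HasRevRep Puni XX1 YY1 XX2 YY2 := by
  rintro ⟨T, mT, Ψ, mΨ, μ, hμ, ν, hν, β, hβ, α, hα, heq⟩
  have hv : ∀ a b c : Bool, Puni {ω | XX1 ω = a ∧ YY1 ω = b ∧ YY2 ω = c}
      = (∫⁻ θ, α (θ, b) {a} ∂μ) * ∫⁻ ψ, β ψ {b} * β ψ {c} ∂ν := by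
    intro a b c
    rw [← quad_S, heq, rev_value]
  have e1 := hv true true false
  have e2 := hv false true true
  have e3 := hv true true true
  have e4 := hv false true false
  rw [vTTF] at e1
  rw [vFTT] at e2
  rw [vTTT] at e3
  rw [vFTF] at e4
  have hkey : ((8:ℝ≥0∞)⁻¹ * 1) * ((8:ℝ≥0∞)⁻¹ * 2) = ((8:ℝ≥0∞)⁻¹ * 3) * ((8:ℝ≥0∞)⁻¹ * 0) := by
    rw [e1, e2, e3, e4]
    ring
  simp at hkey

end MechVarAux

/-- **Non-degeneracy of mechanism variability.** There exist a probability space and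
Bool-valued random variables `X¹, Y¹, X², Y²` whose joint law admits a mechanism-variability
`X → Y` representation, yet `X¹` is not conditionally independent of `Y²` given `Y¹`;
consequently, this joint law admits no `Y → X` representation. -/
theorem exists_mechVarRep_not_condIndep :
    ∃ (Ω : Type) (mΩ : MeasurableSpace Ω), letI := mΩ;
    ∃ (_ : StandardBorelSpace Ω) (P : Measure Ω) (hP : IsProbabilityMeasure P), letI := hP;
    ∃ (X1 Y1 X2 Y2 : Ω → Bool) (_ : Measurable X1) (hY1 : Measurable Y1)
      (_ : Measurable X2) (_ : Measurable Y2),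
      HasMechVarRep P X1 Y1 X2 Y2 ∧
      ¬ CondIndepRV P X1 Y2 Y1 hY1 ∧
      ¬ HasRevRep P X1 Y1 X2 Y2 := by
  refine ⟨MechVarAux.Ω3, inferInstance, inferInstance, MechVarAux.Puni, inferInstance,
    MechVarAux.XX1, MechVarAux.YY1, MechVarAux.XX2, MechVarAux.YY2,
    Measurable.of_discrete, Measurable.of_discrete, Measurable.of_discrete,
    Measurable.of_discrete, MechVarAux.mech_rep, MechVarAux.not_ci _, MechVarAux.not_rev⟩
end

section
/- Conditional independence in the bivariate Causal de Finetti model: Let μ be a probability measure on [0,1] and ν a probability measure on [0,1] × [0,1]. Let {(X_n, Y_n)}_{n∈ℕ} be a sequence of pairs of {0,1}-valued random variables such that for every n and all x_1, y_1, …, x_n, y_n ∈ {0,1}: P(X_1 = x_1, Y_1 = y_1, …, X_n = x_n, Y_n = y_n) = ∫∫ ∏_{i=1}^n ψ(x_i)^{y_i} (1 − ψ(x_i))^{1 − y_i} · θ^{x_i} (1 − θ)^{1 − x_i} dν(ψ) dμ(θ), where ψ(0), ψ(1) denote the two coordinates of ψ ∈ [0,1]². Then for every n, the random vector (Y_1,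 …, Y_n) is conditionally independent of X_{n+1} given (X_1, …, X_n). -/
open MeasureTheory ProbabilityTheory

/-- Bernoulli weight: `bern p b = p` if `b` and `1 - p` otherwise. -/
noncomputable def bern (p : ℝ) (b : Bool) : ℝ := if b then p else 1 - p

/-- The de Finetti representation of the bivariate Causal de Finetti model: there are
probability measures `μ` on `[0,1]` and `ν` on `[0,1]²` such that all finite-dimensional
probabilities are the corresponding mixtures of i.i.d. Bernoulli laws, where `X` has
parameter `θ` and `Y` given `X = x` has parameter `ψ x`. -/
def CdFRep {Ω : Type*} [MeasurableSpace Ω] (P : Measure Ω) (X Y : ℕ → Ω → Bool) : Prop :=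
  ∃ (μ : Measure (Set.Icc (0:ℝ) 1)) (_ : IsProbabilityMeasure μ)
    (ν : Measure (Set.Icc (0:ℝ) 1 × Set.Icc (0:ℝ) 1)) (_ : IsProbabilityMeasure ν),
    ∀ (n : ℕ) (x y : Fin n → Bool),
      (P {ω | ∀ i : Fin n, X i.1 ω = x i ∧ Y i.1 ω = y i}).toReal =
        ∫ θ : Set.Icc (0:ℝ) 1,
          (∫ ψ : Set.Icc (0:ℝ) 1 × Set.Icc (0:ℝ) 1,
            (∏ i : Fin n,
              bern (if x i then (ψ.2 : ℝ) else (ψ.1 : ℝ)) (y i) * bern (θ : ℝ) (x i)) ∂ν) ∂μ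


abbrev Io1 := Set.Icc (0:ℝ) 1

lemma bern_mem01 {p : ℝ} (hp : p ∈ Set.Icc (0:ℝ) 1) (c : Bool) :
    bern p c ∈ Set.Icc (0:ℝ) 1 := by
  obtain ⟨h0, h1⟩ := hp
  cases c <;> simp [bern] <;> constructor <;> linarith

lemma measurable_bern_comp {α : Type*} [MeasurableSpace α] {g : α → ℝ}
    (hg : Measurable g) (c : Bool) : Measurable fun a => bern (g a) c := by
  cases c
  · simpa [bern] using (show Measurable fun a => 1 - g a from measurable_const.sub hg)
  · simpa [bern] using hg


lemma measurable_coord (xi : Bool) :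
    Measurable fun ψ : Io1 × Io1 => (if xi then (ψ.2 : ℝ) else (ψ.1 : ℝ)) := by
  cases xi
  · simpa using (show Measurable fun ψ : Io1 × Io1 => (ψ.1 : ℝ) from measurable_subtype_coe.comp measurable_fst)
  · simpa using (show Measurable fun ψ : Io1 × Io1 => (ψ.2 : ℝ) from measurable_subtype_coe.comp measurable_snd)

lemma coord_mem (ψ : Io1 × Io1) (xi : Bool) :
    (if xi then (ψ.2 : ℝ) else (ψ.1 : ℝ)) ∈ Set.Icc (0:ℝ) 1 := by
  cases xi
  · simpa using ψ.1.2
  · simpa using ψ.2.2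

lemma integrable_of_mem01 {α : Type*} [MeasurableSpace α] (μ : Measure α)
    [IsProbabilityMeasure μ] {f : α → ℝ} (hm : Measurable f)
    (hf : ∀ a, f a ∈ Set.Icc (0:ℝ) 1) : Integrable f μ := by
  refine ⟨hm.aestronglyMeasurable, HasFiniteIntegral.of_bounded (C := 1) (ae_of_all _ fun a => ?_)⟩
  rw [Real.norm_eq_abs, abs_le]
  exact ⟨by linarith [(hf a).1], (hf a).2⟩

lemma prod_mem01 {ι : Type*} [Fintype ι] {f : ι → ℝ} (hf : ∀ i, f i ∈ Set.Icc (0:ℝ) 1) :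
    (∏ i, f i) ∈ Set.Icc (0:ℝ) 1 :=
  ⟨Finset.prod_nonneg fun i _ => (hf i).1,
   Finset.prod_le_one (fun i _ => (hf i).1) (fun i _ => (hf i).2)⟩


section Rep
variable {Ω : Type*} [MeasurableSpace Ω] (P : Measure Ω)
  (X Y : ℕ → Ω → Bool)
  (μ : Measure Io1) [IsProbabilityMeasure μ]
  (ν : Measure (Io1 × Io1)) [IsProbabilityMeasure ν]
  (hP : ∀ (n : ℕ) (x y : Fin n → Bool),
      (P {ω | ∀ i : Fin n, X i.1 ω = x i ∧ Y i.1 ω = y i}).toReal =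
        ∫ θ : Io1, (∫ ψ : Io1 × Io1,
            (∏ i : Fin n,
              bern (if x i then (ψ.2 : ℝ) else (ψ.1 : ℝ)) (y i) * bern (θ : ℝ) (x i)) ∂ν) ∂μ)

include hP

lemma q1_eq (n : ℕ) (v y : Fin n → Bool) :
    (P {ω | ∀ i : Fin n, X i.1 ω = v i ∧ Y i.1 ω = y i}).toReal =
      (∫ ψ : Io1 × Io1, ∏ i, bern (if v i then (ψ.2:ℝ) else (ψ.1:ℝ)) (y i) ∂ν)
        * ∫ θ : Io1, ∏ i, bern (θ:ℝ) (v i) ∂μ := by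
  rw [hP n v y]
  simp_rw [Finset.prod_mul_distrib, integral_mul_const, integral_const_mul]

lemma q3_eq (hX : ∀ n, Measurable (X n)) (hY : ∀ n, Measurable (Y n))
    [IsFiniteMeasure P] (n : ℕ) (v y : Fin n → Bool) (b : Bool) :
    (P {ω | (∀ i : Fin n, X i.1 ω = v i ∧ Y i.1 ω = y i) ∧ X n ω = b}).toReal =
      (∫ ψ : Io1 × Io1, ∏ i, bern (if v i then (ψ.2:ℝ) else (ψ.1:ℝ)) (y i) ∂ν)
        * ∫ θ : Io1, (∏ i, bern (θ:ℝ) (v i)) * bern (θ:ℝ) b ∂μ := by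
  classical
  set E : Bool → Set Ω := fun c =>
    {ω | ∀ i : Fin (n+1), X i.1 ω = Fin.snoc (α := fun _ => Bool) v b i ∧ Y i.1 ω = Fin.snoc (α := fun _ => Bool) y c i} with hE
  have hEmem : ∀ c ω, ω ∈ E c ↔
      ((∀ i : Fin n, X i.1 ω = v i ∧ Y i.1 ω = y i) ∧ X n ω = b) ∧ Y n ω = c := by
    intro c ω
    simp only [hE, Set.mem_setOf_eq, Fin.forall_fin_succ', Fin.snoc_castSucc, Fin.snoc_last,
      Fin.coe_castSucc, Fin.val_last]
    tauto
  have hsplit : {ω | (∀ i : Fin n, X i.1 ω = v i ∧ Y i.1 ω = y i) ∧ X n ω = b}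
      = E true ∪ E false := by
    ext ω
    simp only [Set.mem_union, hEmem]
    rcases Bool.dichotomy (Y n ω) with h | h <;> simp [h]
  have hEmeas : ∀ c, MeasurableSet (E c) := by
    intro c
    have : E c = ⋂ i : Fin (n+1),
        ((X i.1 ⁻¹' {Fin.snoc (α := fun _ => Bool) v b i}) ∩ (Y i.1 ⁻¹' {Fin.snoc (α := fun _ => Bool) y c i})) := by
      ext ω; simp [hE, Set.mem_iInter]
    rw [this]
    exact MeasurableSet.iInter fun i =>
      ((hX i.1) (measurableSet_singleton _)).inter ((hY i.1) (measurableSet_singleton _))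
  have hdisj : Disjoint (E true) (E false) := by
    refine Set.disjoint_left.mpr fun ω h1 h2 => ?_
    rw [hEmem] at h1 h2
    rw [h1.2] at h2; exact Bool.noConfusion h2.2
  have htrue : ∀ c : Bool, (P (E c)).toReal =
      (∫ ψ : Io1 × Io1, (∏ i, bern (if v i then (ψ.2:ℝ) else (ψ.1:ℝ)) (y i))
          * bern (if b then (ψ.2:ℝ) else (ψ.1:ℝ)) c ∂ν)
        * ∫ θ : Io1, (∏ i, bern (θ:ℝ) (v i)) * bern (θ:ℝ) b ∂μ := by
    intro c
    rw [hE]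
    rw [hP (n+1) (Fin.snoc v b) (Fin.snoc y c)]
    have hprod : ∀ (θ : Io1) (ψ : Io1 × Io1),
        (∏ i : Fin (n+1), bern (if Fin.snoc (α := fun _ => Bool) v b i then (ψ.2:ℝ) else (ψ.1:ℝ)) (Fin.snoc (α := fun _ => Bool) y c i)
            * bern (θ:ℝ) (Fin.snoc (α := fun _ => Bool) v b i))
        = ((∏ i, bern (if v i then (ψ.2:ℝ) else (ψ.1:ℝ)) (y i))
              * bern (if b then (ψ.2:ℝ) else (ψ.1:ℝ)) c)
            * ((∏ i, bern (θ:ℝ) (v i)) * bern (θ:ℝ) b) := by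
      intro θ ψ
      rw [Fin.prod_univ_castSucc]
      simp only [Fin.snoc_castSucc, Fin.snoc_last]
      rw [Finset.prod_mul_distrib]; ring
    simp_rw [hprod, integral_mul_const, integral_const_mul]
  have hsum : (P {ω | (∀ i : Fin n, X i.1 ω = v i ∧ Y i.1 ω = y i) ∧ X n ω = b}).toReal
      = (P (E true)).toReal + (P (E false)).toReal := by
    rw [hsplit, measure_union hdisj (hEmeas false), ENNReal.toReal_add
      (measure_ne_top _ _) (measure_ne_top _ _)]
  rw [hsum, htrue true, htrue false, ← add_mul]
  congr 1
  have hint : ∀ c : Bool, Integrable (fun ψ : Io1 × Io1 =>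
      (∏ i, bern (if v i then (ψ.2:ℝ) else (ψ.1:ℝ)) (y i))
        * bern (if b then (ψ.2:ℝ) else (ψ.1:ℝ)) c) ν := by
    intro c
    refine integrable_of_mem01 ν ?_ ?_
    · exact (Finset.measurable_prod _ fun i _ =>
        measurable_bern_comp (measurable_coord (v i)) (y i)).mul
        (measurable_bern_comp (measurable_coord b) c)
    · intro ψ
      have h1 := prod_mem01 (f := fun i => bern (if v i then (ψ.2:ℝ) else (ψ.1:ℝ)) (y i))
        (fun i => bern_mem01 (coord_mem ψ (v i)) (y i))
      have h2 := bern_mem01 (coord_mem ψ b) c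
      exact ⟨mul_nonneg h1.1 h2.1, mul_le_one₀ h1.2 h2.1 h2.2⟩
  rw [← integral_add (hint true) (hint false)]
  refine integral_congr_ae (ae_of_all _ fun ψ => ?_)
  cases b <;> simp [bern] <;> ring

end Rep


lemma condexp_indicator_comap_finite {Ω γ : Type*} [MeasurableSpace Ω] [MeasurableSpace γ]
    [Fintype γ] [MeasurableSingletonClass γ]
    (P : Measure Ω) [IsProbabilityMeasure P] {Z : Ω → γ} (hZ : Measurable Z)
    {A : Set Ω} (hA : MeasurableSet A) :
    (P⟦A | MeasurableSpace.comap Z inferInstance⟧) =ᵐ[P]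
      fun ω => (P (A ∩ Z ⁻¹' {Z ω})).toReal / (P (Z ⁻¹' {Z ω})).toReal := by
  classical
  set r : γ → ℝ := fun v => (P (A ∩ Z ⁻¹' {v})).toReal / (P (Z ⁻¹' {v})).toReal with hr
  have hm : MeasurableSpace.comap Z inferInstance ≤ ‹MeasurableSpace Ω› := hZ.comap_le
  have hkey : ∀ v : γ, r v * (P (Z ⁻¹' {v})).toReal = (P (A ∩ Z ⁻¹' {v})).toReal := by
    intro v
    rcases eq_or_ne (P (Z ⁻¹' {v})) 0 with h0 | h0
    · have : P (A ∩ Z ⁻¹' {v}) = 0 :=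
        measure_mono_null Set.inter_subset_right h0
      simp [hr, h0, this]
    · rw [hr]
      field_simp [ENNReal.toReal_ne_zero.mpr ⟨h0, measure_ne_top _ _⟩]
  -- g is measurable w.r.t. the comap σ-algebra
  have hgm' : Measurable[MeasurableSpace.comap Z inferInstance] (fun ω => r (Z ω)) := by
    exact Measurable.comp (measurable_of_countable r) (Measurable.of_comap_le le_rfl)
  have hbound : ∀ ω, ‖r (Z ω)‖ ≤ ∑ v : γ, ‖r v‖ := fun ω =>
    Finset.single_le_sum (f := fun v => ‖r v‖) (fun v _ => norm_nonneg _) (Finset.mem_univ _)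
  have hgint : Integrable (fun ω => r (Z ω)) P := by
    refine ⟨((hgm'.mono hm le_rfl)).aestronglyMeasurable, ?_⟩
    exact HasFiniteIntegral.of_bounded (C := ∑ v : γ, ‖r v‖) (ae_of_all _ hbound)
  refine (ae_eq_condExp_of_forall_setIntegral_eq hm
      ((integrable_const (1:ℝ)).indicator hA)
      (fun s _ _ => hgint.integrableOn) ?_ ?_).symm
  · rintro s ⟨S, -, rfl⟩ -
    set T : Finset γ := Finset.univ.filter (· ∈ S) with hT
    have hTS : (↑T : Set γ) = S := by ext v; simp [hT]
    have hsets : Z ⁻¹' S = ⋃ v ∈ T, Z ⁻¹' {v} := by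
      rw [← hTS]; ext ω; simp
    rw [hsets,
      integral_biUnion_finset T (fun v _ => hZ (measurableSet_singleton v))
        (fun a _ b _ hab =>
          Set.disjoint_left.mpr fun ω hωa hωb => hab (by rw [← hωa, ← hωb]))
        (fun v _ => hgint.integrableOn),
      integral_biUnion_finset T (fun v _ => hZ (measurableSet_singleton v))
        (fun a _ b _ hab =>
          Set.disjoint_left.mpr fun ω hωa hωb => hab (by rw [← hωa, ← hωb]))
        (fun v _ => ((integrable_const (1:ℝ)).indicator hA).integrableOn)]
    refine Finset.sum_congr rfl fun v _ => ?_
    have h1 : ∫ ω in Z ⁻¹' {v}, r (Z ω) ∂P = r v * (P (Z ⁻¹' {v})).toReal := by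
      rw [setIntegral_congr_fun (hZ (measurableSet_singleton v))
        (fun ω hω => by simp only [Set.mem_preimage, Set.mem_singleton_iff] at hω; rw [hω]),
        setIntegral_const, smul_eq_mul, mul_comm, measureReal_def]
    have h2 : ∫ ω in Z ⁻¹' {v}, A.indicator (fun _ => (1:ℝ)) ω ∂P
        = (P (A ∩ Z ⁻¹' {v})).toReal := by
      rw [setIntegral_indicator hA, setIntegral_const, smul_eq_mul, mul_one,
        Set.inter_comm, measureReal_def]
    rw [h1, h2, hkey]
  · exact (hgm'.stronglyMeasurable).aestronglyMeasurable


/-- Splitting a measure over the finite fibers of a map. -/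
lemma split_toReal {Ω γ : Type*} [MeasurableSpace Ω] [MeasurableSpace γ]
    [Fintype γ] [MeasurableSingletonClass γ]
    (P : Measure Ω) [IsFiniteMeasure P] {W : Ω → γ} (hW : Measurable W)
    {U : Set Ω} (hU : MeasurableSet U) (T : Finset γ) :
    (P (W ⁻¹' ↑T ∩ U)).toReal = ∑ y ∈ T, (P (W ⁻¹' {y} ∩ U)).toReal := by
  have hset : W ⁻¹' ↑T ∩ U = ⋃ y ∈ T, (W ⁻¹' {y} ∩ U) := by
    ext ω; constructor
    · rintro ⟨h1, h2⟩; exact Set.mem_biUnion h1 ⟨rfl, h2⟩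
    · rintro h; simp only [Set.mem_iUnion, Set.mem_inter_iff, Set.mem_preimage, Set.mem_singleton_iff] at h
      obtain ⟨y, hy, rfl, h2⟩ := h; exact ⟨hy, h2⟩
  have hdisj : (↑T : Set γ).Pairwise (Function.onFun Disjoint fun y => W ⁻¹' {y} ∩ U) := by
    intro a _ b _ hab
    refine Set.disjoint_left.mpr fun ω hωa hωb => hab ?_
    rw [← hωa.1, ← hωb.1]
  rw [hset, measure_biUnion_finset hdisj
    (fun y _ => (hW (measurableSet_singleton y)).inter hU),
    ENNReal.toReal_sum (fun y _ => measure_ne_top _ _)]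

/-- **Conditional independence in the bivariate Causal de Finetti model.** If the law of the
sequence `{(Xₙ, Yₙ)}` of pairs of Bool-valued random variables admits the bivariate Causal
de Finetti mixture representation, then for every `n` the random vector `(Y₁, …, Yₙ)` is
conditionally independent of `X_{n+1}` given `(X₁, …, Xₙ)`. -/
theorem cdfRep_condIndep {Ω : Type*} [MeasurableSpace Ω] [StandardBorelSpace Ω]
    (P : Measure Ω) [IsProbabilityMeasure P]
    (X Y : ℕ → Ω → Bool) (hX : ∀ n, Measurable (X n)) (hY : ∀ n, Measurable (Y n))
    (hrep : CdFRep P X Y) :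
    ∀ n : ℕ,
      CondIndepFun
        (MeasurableSpace.comap (fun ω (i : Fin n) => X i.1 ω) inferInstance)
        (Measurable.comap_le (measurable_pi_iff.mpr fun i => hX i.1))
        (fun ω (i : Fin n) => Y i.1 ω) (X n) P := by

  classical
  obtain ⟨μ, hμ, ν, hν, hP⟩ := hrep
  haveI := hμ; haveI := hν
  intro n
  set Z : Ω → (Fin n → Bool) := fun ω i => X i.1 ω with hZdef
  set f : Ω → (Fin n → Bool) := fun ω i => Y i.1 ω with hfdef
  have hZ : Measurable Z := measurable_pi_iff.mpr fun i => hX i.1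
  have hf : Measurable f := measurable_pi_iff.mpr fun i => hY i.1
  rw [condIndepFun_iff_condExp_inter_preimage_eq_mul hf (hX n)]
  intro s t hs ht
  set F : (Fin n → Bool) → (Fin n → Bool) → ℝ := fun v y =>
    ∫ ψ : Io1 × Io1, ∏ i, bern (if v i then (ψ.2:ℝ) else (ψ.1:ℝ)) (y i) ∂ν with hF
  set G : (Fin n → Bool) → ℝ := fun v => ∫ θ : Io1, ∏ i, bern (θ:ℝ) (v i) ∂μ with hG
  set Gb : (Fin n → Bool) → Bool → ℝ := fun v b =>
    ∫ θ : Io1, (∏ i, bern (θ:ℝ) (v i)) * bern (θ:ℝ) b ∂μ with hGb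
  -- the single-atom probabilities
  have hq1' : ∀ v y : Fin n → Bool,
      (P (f ⁻¹' {y} ∩ Z ⁻¹' {v})).toReal = F v y * G v := by
    intro v y
    have hset : f ⁻¹' {y} ∩ Z ⁻¹' {v}
        = {ω | ∀ i : Fin n, X i.1 ω = v i ∧ Y i.1 ω = y i} := by
      ext ω
      simp only [Set.mem_inter_iff, Set.mem_preimage, Set.mem_singleton_iff, Set.mem_setOf_eq,
        hZdef, hfdef, funext_iff, forall_and]
      tauto
    rw [hset]
    exact q1_eq P X Y μ ν hP n v y
  have hq3' : ∀ (v y : Fin n → Bool) (b : Bool),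
      (P (X n ⁻¹' {b} ∩ (f ⁻¹' {y} ∩ Z ⁻¹' {v}))).toReal = F v y * Gb v b := by
    intro v y b
    have hset : X n ⁻¹' {b} ∩ (f ⁻¹' {y} ∩ Z ⁻¹' {v})
        = {ω | (∀ i : Fin n, X i.1 ω = v i ∧ Y i.1 ω = y i) ∧ X n ω = b} := by
      ext ω
      simp only [Set.mem_inter_iff, Set.mem_preimage, Set.mem_singleton_iff, Set.mem_setOf_eq,
        hZdef, hfdef, funext_iff, forall_and]
      tauto
    rw [hset]
    exact q3_eq P X Y μ ν hP hX hY n v y b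
  set sF : Finset (Fin n → Bool) := Finset.univ.filter (· ∈ s) with hsF
  set tF : Finset Bool := Finset.univ.filter (· ∈ t) with htF
  have hsFs : (↑sF : Set (Fin n → Bool)) = s := by ext u; simp [hsF]
  have htFt : (↑tF : Set Bool) = t := by ext u; simp [htF]
  -- decompose events
  have hDmeas : ∀ v : Fin n → Bool, MeasurableSet (Z ⁻¹' {v}) :=
    fun v => hZ (measurableSet_singleton v)
  have hA : ∀ v, (P (f ⁻¹' s ∩ X n ⁻¹' t ∩ Z ⁻¹' {v})).toReal
      = ∑ y ∈ sF, ∑ b ∈ tF, F v y * Gb v b := by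
    intro v
    rw [Set.inter_assoc, ← hsFs, split_toReal P hf (((hX n) ht).inter (hDmeas v)) sF]
    refine Finset.sum_congr rfl fun y _ => ?_
    rw [Set.inter_left_comm, ← htFt,
      split_toReal P (hX n) ((hf (measurableSet_singleton y)).inter (hDmeas v)) tF]
    exact Finset.sum_congr rfl fun b _ => hq3' v y b
  have hD : ∀ v, (P (Z ⁻¹' {v})).toReal = ∑ y : Fin n → Bool, F v y * G v := by
    intro v
    have : Z ⁻¹' {v} = f ⁻¹' ↑(Finset.univ : Finset (Fin n → Bool)) ∩ Z ⁻¹' {v} := by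
      simp
    rw [this, split_toReal P hf (hDmeas v) Finset.univ]
    exact Finset.sum_congr rfl fun y _ => hq1' v y
  have hB : ∀ v, (P (f ⁻¹' s ∩ Z ⁻¹' {v})).toReal = ∑ y ∈ sF, F v y * G v := by
    intro v
    rw [← hsFs, split_toReal P hf (hDmeas v) sF]
    exact Finset.sum_congr rfl fun y _ => hq1' v y
  have hC : ∀ v, (P (X n ⁻¹' t ∩ Z ⁻¹' {v})).toReal
      = ∑ b ∈ tF, ∑ y : Fin n → Bool, F v y * Gb v b := by
    intro v
    rw [← htFt, split_toReal P (hX n) (hDmeas v) tF]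
    refine Finset.sum_congr rfl fun b _ => ?_
    have : X n ⁻¹' {b} ∩ Z ⁻¹' {v}
        = f ⁻¹' ↑(Finset.univ : Finset (Fin n → Bool)) ∩ (X n ⁻¹' {b} ∩ Z ⁻¹' {v}) := by
      simp
    rw [this, split_toReal P hf (((hX n) (measurableSet_singleton b)).inter (hDmeas v))
      Finset.univ]
    refine Finset.sum_congr rfl fun y _ => ?_
    rw [Set.inter_left_comm]
    exact hq3' v y b
  have hkey : ∀ v, (P (f ⁻¹' s ∩ X n ⁻¹' t ∩ Z ⁻¹' {v})).toReal * (P (Z ⁻¹' {v})).toReal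
      = (P (f ⁻¹' s ∩ Z ⁻¹' {v})).toReal * (P (X n ⁻¹' t ∩ Z ⁻¹' {v})).toReal := by
    intro v
    rw [hA v, hD v, hB v, hC v]
    simp_rw [← Finset.sum_mul_sum, ← Finset.sum_mul, ← Finset.mul_sum]
    ring
  -- conditional expectations
  have h1 := condexp_indicator_comap_finite P hZ ((hf hs).inter ((hX n) ht))
  have h2 := condexp_indicator_comap_finite P hZ (hf hs)
  have h3 := condexp_indicator_comap_finite P hZ ((hX n) ht)
  filter_upwards [h1, h2, h3] with ω e1 e2 e3
  rw [e1, e2, e3]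
  set v := Z ω
  have hk := hkey v
  rcases eq_or_ne ((P (Z ⁻¹' {v})).toReal) 0 with h0 | h0
  · have hD0 : P (Z ⁻¹' {v}) = 0 := by
      rcases (ENNReal.toReal_eq_zero_iff _).mp h0 with h | h
      · exact h
      · exact absurd h (measure_ne_top _ _)
    have z1 : P (f ⁻¹' s ∩ X n ⁻¹' t ∩ Z ⁻¹' {v}) = 0 :=
      measure_mono_null Set.inter_subset_right hD0
    have z2 : P (f ⁻¹' s ∩ Z ⁻¹' {v}) = 0 :=
      measure_mono_null Set.inter_subset_right hD0
    have z3 : P (X n ⁻¹' t ∩ Z ⁻¹' {v}) = 0 :=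
      measure_mono_null Set.inter_subset_right hD0
    simp [z1, z2, z3, h0]
  · field_simp
    linear_combination hk
end
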